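/- arXiv:math/9410213 — 5 statements merged into one kernel-verified Lean document; each statement's English description precedes it below -/
import Mathlib

section
/- The area of the plane region {(x,y) ∈ ℝ² : |x·y·(x−y)| ≤ 1} is exactly 3·B(1/3,1/3), where B denotes the Beta function. -/
open MeasureTheory
open scoped ENNReal

open intervalIntegral

/-- The Beta function `B(x,y) = Γ(x)Γ(y)/Γ(x+y)`. -/
noncomputable def Beta (x y : ℝ) : ℝ := Real.Gamma x * Real.Gamma y / Real.Gamma (x + y)


lemma eqOn01 : ∀ x ∈ Set.uIcc (0:ℝ) 1,
    ((x:ℂ) ^ ((1/3 : ℂ) - 1) * (1 - (x:ℂ)) ^ ((1/3 : ℂ) - 1)) =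
      ((x ^ (-2/3 : ℝ) * (1 - x) ^ (-2/3 : ℝ) : ℝ) : ℂ) := by
  intro x hx
  rw [Set.uIcc_of_le (by norm_num : (0:ℝ) ≤ 1)] at hx
  have hx0 : (0:ℝ) ≤ x := hx.1
  have hx1 : (0:ℝ) ≤ 1 - x := by linarith [hx.2]
  have h1 : ((1/3 : ℂ) - 1) = ((-2/3 : ℝ) : ℂ) := by push_cast; ring
  rw [h1, ← Complex.ofReal_cpow hx0, ← Complex.ofReal_one, ← Complex.ofReal_sub,
    ← Complex.ofReal_cpow hx1, ← Complex.ofReal_mul]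

lemma beta_real_integral :
    ∫ x in (0:ℝ)..1, x ^ (-2/3 : ℝ) * (1 - x) ^ (-2/3 : ℝ) = Beta (1/3) (1/3) := by
  have h3 : (0:ℝ) < Complex.re (1/3 : ℂ) := by norm_num
  have hc := Complex.Gamma_mul_Gamma_eq_betaIntegral h3 h3
  have hb : Complex.betaIntegral (1/3) (1/3)
      = ((∫ x in (0:ℝ)..1, x ^ (-2/3 : ℝ) * (1 - x) ^ (-2/3 : ℝ) : ℝ) : ℂ) := by
    rw [Complex.betaIntegral, intervalIntegral.integral_congr eqOn01,
      intervalIntegral.integral_ofReal]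
  rw [hb] at hc
  have h13 : (1/3 : ℂ) = ((1/3 : ℝ) : ℂ) := by norm_num
  have h23 : (1/3 : ℂ) + (1/3 : ℂ) = ((2/3 : ℝ) : ℂ) := by norm_num
  rw [h13] at hc
  rw [show ((1/3:ℝ):ℂ) + ((1/3:ℝ):ℂ) = ((2/3 : ℝ) : ℂ) by norm_num] at hc
  rw [Complex.Gamma_ofReal, Complex.Gamma_ofReal] at hc
  have hre : Real.Gamma (1/3) * Real.Gamma (1/3)
      = Real.Gamma (2/3) * ∫ x in (0:ℝ)..1, x ^ (-2/3 : ℝ) * (1 - x) ^ (-2/3 : ℝ) := by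
    exact_mod_cast hc
  have hG : Real.Gamma (2/3) ≠ 0 := (Real.Gamma_pos_of_pos (by norm_num)).ne'
  rw [Beta, show (1/3 : ℝ) + 1/3 = 2/3 by norm_num]
  field_simp [hG] at hre ⊢
  linarith [hre]

lemma beta_integrableOn :
    IntegrableOn (fun x : ℝ => x ^ (-2/3 : ℝ) * (1 - x) ^ (-2/3 : ℝ)) (Set.Ioo 0 1) := by
  have h3 : (0:ℝ) < Complex.re (1/3 : ℂ) := by norm_num
  have hc := Complex.betaIntegral_convergent h3 h3
  have h1 : IntegrableOn (fun x : ℝ =>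
      (x:ℂ) ^ ((1/3 : ℂ) - 1) * (1 - (x:ℂ)) ^ ((1/3 : ℂ) - 1)) (Set.Ioc 0 1) := hc.1
  have h2 : IntegrableOn (fun x : ℝ =>
      ((x:ℂ) ^ ((1/3 : ℂ) - 1) * (1 - (x:ℂ)) ^ ((1/3 : ℂ) - 1)).re) (Set.Ioc 0 1) := h1.re
  refine (h2.mono_set Set.Ioo_subset_Ioc_self).congr_fun ?_ measurableSet_Ioo
  intro x hx
  have := eqOn01 x (by rw [Set.uIcc_of_le (by norm_num : (0:ℝ) ≤ 1)]; exact ⟨hx.1.le, hx.2.le⟩)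
  simp only []; rw [this, Complex.ofReal_re]

noncomputable def phi (p : ℝ × ℝ) : ℝ × ℝ := (p.2 * p.1, p.2 * (1 - p.1))

noncomputable def A (p : ℝ × ℝ) : (ℝ × ℝ) →L[ℝ] (ℝ × ℝ) :=
  (p.2 • ContinuousLinearMap.fst ℝ ℝ ℝ + p.1 • ContinuousLinearMap.snd ℝ ℝ ℝ).prod
    ((-p.2) • ContinuousLinearMap.fst ℝ ℝ ℝ + (1 - p.1) • ContinuousLinearMap.snd ℝ ℝ ℝ)

lemma hasFDerivAt_phi (p : ℝ × ℝ) : HasFDerivAt phi (A p) p := by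
  have h1 : HasFDerivAt (fun q : ℝ × ℝ => q.2 * q.1)
      (p.2 • ContinuousLinearMap.fst ℝ ℝ ℝ + p.1 • ContinuousLinearMap.snd ℝ ℝ ℝ) p := by
    have := (hasFDerivAt_snd (𝕜 := ℝ) (E := ℝ) (F := ℝ) (p := p)).mul
      (hasFDerivAt_fst (𝕜 := ℝ) (E := ℝ) (F := ℝ) (p := p))
    exact this
  have h2 : HasFDerivAt (fun q : ℝ × ℝ => q.2 * (1 - q.1))
      ((-p.2) • ContinuousLinearMap.fst ℝ ℝ ℝ + (1 - p.1) • ContinuousLinearMap.snd ℝ ℝ ℝ) p := by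
    have hs : HasFDerivAt (fun q : ℝ × ℝ => 1 - q.1)
        (-(ContinuousLinearMap.fst ℝ ℝ ℝ)) p := by
      refine ((hasFDerivAt_const (1:ℝ) p).sub (hasFDerivAt_fst (𝕜 := ℝ) (p := p))).congr_fderiv ?_
      simp
    have := (hasFDerivAt_snd (𝕜 := ℝ) (E := ℝ) (F := ℝ) (p := p)).mul hs
    refine this.congr_fderiv ?_
    ext <;> simp
  exact h1.prodMk h2

lemma det_A (p : ℝ × ℝ) : (A p).det = p.2 := by
  have : (A p).det = Matrix.det (LinearMap.toMatrix (Module.Basis.finTwoProd ℝ) (Module.Basis.finTwoProd ℝ)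
      ((A p) : (ℝ × ℝ) →ₗ[ℝ] (ℝ × ℝ))) := (LinearMap.det_toMatrix _ _).symm
  rw [this, Matrix.det_fin_two]
  simp [LinearMap.toMatrix_apply, A, Module.Basis.finTwoProd]
  ring

noncomputable def Rr (a : ℝ) : ℝ := (a * (1 - a)) ^ (-(1/3) : ℝ)

def Wset : Set (ℝ × ℝ) := {p | 0 < p.1 ∧ 0 < p.2 ∧ |p.1 * p.2 * (p.1 + p.2)| ≤ 1}

def sset : Set (ℝ × ℝ) :=
  {p | p.1 ∈ Set.Ioo 0 1 ∧ 0 < p.2 ∧ p.2 ^ 3 * (p.1 * (1 - p.1)) ≤ 1}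

lemma measurableSet_sset : MeasurableSet sset := by
  have h1 : MeasurableSet {p : ℝ × ℝ | p.1 ∈ Set.Ioo 0 1} :=
    measurable_fst measurableSet_Ioo
  have h2 : MeasurableSet {p : ℝ × ℝ | 0 < p.2} := measurableSet_lt measurable_const measurable_snd
  have h3 : MeasurableSet {p : ℝ × ℝ | p.2 ^ 3 * (p.1 * (1 - p.1)) ≤ 1} :=
    measurableSet_le (by fun_prop) measurable_const
  exact (h1.inter (h2.inter h3)).congr (by ext p; simp [sset, and_assoc])

lemma aux_rpow {a r : ℝ} (ha : 0 < a) (ha' : a < 1) (hr : 0 < r) :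
    r ^ 3 * (a * (1 - a)) ≤ 1 ↔ r ≤ Rr a := by
  have hc : 0 < a * (1 - a) := mul_pos ha (by linarith)
  have hkey : (Rr a) ^ 3 = (a * (1 - a))⁻¹ := by
    rw [Rr, ← Real.rpow_natCast ((a * (1-a)) ^ (-(1/3):ℝ)) 3, ← Real.rpow_mul hc.le,
      show (-(1/3):ℝ) * (3:ℕ) = -1 by norm_num, Real.rpow_neg_one]
  have hRpos : 0 < Rr a := Real.rpow_pos_of_pos hc _
  constructor
  · intro h
    by_contra hcon
    push_neg at hcon
    have h3 : (Rr a) ^ 3 < r ^ 3 := by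
      apply pow_lt_pow_left₀ hcon hRpos.le; norm_num
    rw [hkey] at h3
    have h4 : (a * (1 - a))⁻¹ * (a * (1 - a)) < r ^ 3 * (a * (1 - a)) :=
      mul_lt_mul_of_pos_right h3 hc
    rw [inv_mul_cancel₀ hc.ne'] at h4
    linarith
  · intro h
    have h3 : r ^ 3 ≤ (Rr a) ^ 3 := by
      apply pow_le_pow_left₀ hr.le h
    rw [hkey] at h3
    calc r ^ 3 * (a * (1 - a)) ≤ (a * (1-a))⁻¹ * (a * (1-a)) :=
          mul_le_mul_of_nonneg_right h3 hc.le
      _ = 1 := inv_mul_cancel₀ hc.ne'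

lemma injOn_phi : Set.InjOn phi sset := by
  rintro p hp q hq h
  have h1 : p.2 * p.1 = q.2 * q.1 := congrArg Prod.fst h
  have h2 : p.2 * (1 - p.1) = q.2 * (1 - q.1) := congrArg Prod.snd h
  have hr : p.2 = q.2 := by nlinarith [hp.2.1, hq.2.1]
  have ha : p.1 = q.1 := by
    have := hp.2.1
    rw [hr] at h1
    exact mul_left_cancel₀ (by rw [← hr]; exact hp.2.1.ne') h1
  exact Prod.ext ha hr

lemma image_phi : phi '' sset = Wset := by
  ext q
  constructor
  · rintro ⟨p, ⟨⟨ha0, ha1⟩, hr0, hle⟩, rfl⟩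
    refine ⟨mul_pos hr0 ha0, mul_pos hr0 (by linarith), ?_⟩
    have : p.2 * p.1 * (p.2 * (1 - p.1)) * (p.2 * p.1 + p.2 * (1 - p.1))
        = p.2 ^ 3 * (p.1 * (1 - p.1)) := by ring
    rw [phi, this, abs_of_nonneg (mul_nonneg (by positivity) (mul_nonneg ha0.le (by linarith)))]
    exact hle
  · rintro ⟨hu, hv, hle⟩
    refine ⟨(q.1 / (q.1 + q.2), q.1 + q.2), ⟨⟨?_, ?_⟩, ?_, ?_⟩, ?_⟩
    · exact div_pos hu (by linarith)
    · rw [div_lt_one (by linarith)]; linarith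
    · linarith
    · have hs : (0:ℝ) < q.1 + q.2 := by linarith
      have : (q.1 + q.2) ^ 3 * (q.1 / (q.1 + q.2) * (1 - q.1 / (q.1 + q.2)))
          = q.1 * q.2 * (q.1 + q.2) := by field_simp; ring
      rw [this, ← abs_of_nonneg (by positivity : (0:ℝ) ≤ q.1 * q.2 * (q.1 + q.2))]
      exact hle
    · have hs : (q.1 + q.2) ≠ 0 := by positivity
      rw [phi]
      have e1 : (q.1 + q.2) * (q.1 / (q.1 + q.2)) = q.1 := by field_simp
      have e2 : (q.1 + q.2) * (1 - q.1 / (q.1 + q.2)) = q.2 := by field_simp; ring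
      exact Prod.ext e1 e2
lemma lint_Ioc (R : ℝ) (hR : 0 ≤ R) :
    ∫⁻ r in Set.Ioc 0 R, ENNReal.ofReal r = ENNReal.ofReal (R ^ 2 / 2) := by
  rw [← ofReal_integral_eq_lintegral_ofReal (intervalIntegrable_id (μ := volume)
      (a := 0) (b := R) : IntervalIntegrable (fun x : ℝ => x) volume 0 R).1
    (ae_restrict_of_forall_mem measurableSet_Ioc fun x hx => hx.1.le)]
  rw [← intervalIntegral.integral_of_le hR, integral_id]
  norm_num

lemma vol_Wset : volume Wset = ENNReal.ofReal (Beta (1/3) (1/3) / 2) := by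
  have hd : ∀ x ∈ sset, HasFDerivWithinAt phi (A x) sset x :=
    fun x _ => (hasFDerivAt_phi x).hasFDerivWithinAt
  have key := lintegral_abs_det_fderiv_eq_addHaar_image volume measurableSet_sset hd injOn_phi
  rw [image_phi] at key
  rw [← key, setLIntegral_congr_fun measurableSet_sset
    (fun p hp => by
      rw [det_A, abs_of_pos hp.2.1])]
  rw [← lintegral_indicator measurableSet_sset, Measure.volume_eq_prod,
    lintegral_prod _ ((measurable_snd.ennreal_ofReal.indicator measurableSet_sset).aemeasurable)]
  have hslice : ∀ a : ℝ, (∫⁻ r, sset.indicator (fun p => ENNReal.ofReal p.2) (a, r))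
      = Set.indicator (Set.Ioo 0 1) (fun a => ENNReal.ofReal ((Rr a) ^ 2 / 2)) a := by
    intro a
    by_cases ha : a ∈ Set.Ioo (0:ℝ) 1
    · have hmem : ∀ r : ℝ, ((a, r) ∈ sset) ↔ r ∈ Set.Ioc 0 (Rr a) := by
        intro r
        constructor
        · rintro ⟨-, hr, hle⟩
          exact ⟨hr, (aux_rpow ha.1 ha.2 hr).1 hle⟩
        · rintro ⟨hr, hle⟩
          exact ⟨ha, hr, (aux_rpow ha.1 ha.2 hr).2 hle⟩
      have : ∀ r : ℝ, sset.indicator (fun p => ENNReal.ofReal p.2) (a, r)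
          = (Set.Ioc 0 (Rr a)).indicator ENNReal.ofReal r := by
        intro r
        by_cases hr : r ∈ Set.Ioc 0 (Rr a)
        · rw [Set.indicator_of_mem ((hmem r).2 hr), Set.indicator_of_mem hr]
        · rw [Set.indicator_of_notMem (fun hc => hr ((hmem r).1 hc)),
            Set.indicator_of_notMem hr]
      simp_rw [this]
      rw [lintegral_indicator measurableSet_Ioc, Set.indicator_of_mem ha]
      have hc : 0 < a * (1 - a) := mul_pos ha.1 (by linarith [ha.2])
      exact lint_Ioc _ (Real.rpow_pos_of_pos hc _).le
    · have : ∀ r : ℝ, sset.indicator (fun p => ENNReal.ofReal p.2) (a, r) = 0 := by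
        intro r
        exact Set.indicator_of_notMem (fun hc => ha hc.1) _
      simp_rw [this]
      rw [Set.indicator_of_notMem ha, lintegral_zero]
  simp_rw [hslice]
  rw [lintegral_indicator measurableSet_Ioo]
  rw [setLIntegral_congr_fun measurableSet_Ioo
    ((fun a (ha : a ∈ Set.Ioo (0:ℝ) 1) => by
      have hc : 0 < a * (1 - a) := mul_pos ha.1 (by linarith [ha.2])
      have : (Rr a) ^ 2 = a ^ (-2/3 : ℝ) * (1 - a) ^ (-2/3 : ℝ) := by
        rw [Rr, ← Real.rpow_natCast ((a * (1-a)) ^ (-(1/3):ℝ)) 2, ← Real.rpow_mul hc.le,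
          show (-(1/3):ℝ) * (2:ℕ) = (-2/3 : ℝ) by norm_num,
          Real.mul_rpow ha.1.le (by linarith [ha.2])]
      rw [this]))]
  rw [← ofReal_integral_eq_lintegral_ofReal (beta_integrableOn.div_const 2)
    (ae_restrict_of_forall_mem measurableSet_Ioo fun a ha => by
      have h1 : (0:ℝ) ≤ a := ha.1.le
      have h2 : (0:ℝ) ≤ 1 - a := by linarith [ha.2]
      positivity)]
  rw [MeasureTheory.integral_div, ← integral_Ioc_eq_integral_Ioo,
    ← intervalIntegral.integral_of_le (by norm_num : (0:ℝ) ≤ 1), beta_real_integral]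

noncomputable def Lmap (a b c d : ℝ) : (ℝ × ℝ) →ₗ[ℝ] (ℝ × ℝ) :=
  (a • LinearMap.fst ℝ ℝ ℝ + b • LinearMap.snd ℝ ℝ ℝ).prod
    (c • LinearMap.fst ℝ ℝ ℝ + d • LinearMap.snd ℝ ℝ ℝ)

lemma Lmap_apply (a b c d : ℝ) (p : ℝ × ℝ) :
    Lmap a b c d p = (a * p.1 + b * p.2, c * p.1 + d * p.2) := by
  simp [Lmap, smul_eq_mul]

lemma Lmap_det (a b c d : ℝ) : LinearMap.det (Lmap a b c d) = a * d - b * c := by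
  have : LinearMap.det (Lmap a b c d) = Matrix.det (LinearMap.toMatrix (Module.Basis.finTwoProd ℝ)
      (Module.Basis.finTwoProd ℝ) (Lmap a b c d)) := (LinearMap.det_toMatrix _ _).symm
  rw [this, Matrix.det_fin_two]
  simp [LinearMap.toMatrix_apply, Lmap, Module.Basis.finTwoProd]

lemma vol_Lmap_image (a b c d : ℝ) (h : |a * d - b * c| = 1) (s : Set (ℝ × ℝ)) :
    volume (Lmap a b c d '' s) = volume s := by
  rw [Measure.addHaar_image_linearMap, Lmap_det, h, ENNReal.ofReal_one, one_mul]

def Rset : Set (ℝ × ℝ) := {p | |p.1 * p.2 * (p.1 - p.2)| ≤ 1}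

lemma sec1 : Rset ∩ {p | 0 < p.2 ∧ p.2 < p.1} = Lmap 1 1 1 0 '' Wset := by
  ext q
  constructor
  · rintro ⟨hle, h1, h2⟩
    refine ⟨(q.2, q.1 - q.2), ⟨h1, by simpa using h2, ?_⟩, ?_⟩
    · rw [show q.2 * (q.1 - q.2) * (q.2 + (q.1 - q.2)) = q.1 * q.2 * (q.1 - q.2) by ring]
      exact hle
    · rw [Lmap_apply, Prod.ext_iff]; exact ⟨by ring, by ring⟩
  · rintro ⟨p, ⟨hu, hv, hle⟩, rfl⟩
    rw [Lmap_apply]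
    refine ⟨?_, by simpa using hu, by simp; linarith⟩
    show |(1*p.1+1*p.2) * (1*p.1+0*p.2) * ((1*p.1+1*p.2) - (1*p.1+0*p.2))| ≤ 1
    rw [show (1*p.1+1*p.2) * (1*p.1+0*p.2) * ((1*p.1+1*p.2) - (1*p.1+0*p.2))
      = p.1 * p.2 * (p.1 + p.2) by ring]
    exact hle


lemma sec2 : Rset ∩ {p | 0 < p.1 ∧ p.1 < p.2} = Lmap 1 0 1 1 '' Wset := by
  ext q
  constructor
  · rintro ⟨hle, h1, h2⟩
    refine ⟨(q.1, q.2 - q.1), ⟨by simp; linarith, by simp; linarith, ?_⟩, ?_⟩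
    · rw [show ((q.1, q.2 - q.1)).1 * ((q.1, q.2 - q.1)).2 * (((q.1, q.2 - q.1)).1 + ((q.1, q.2 - q.1)).2)
        = -(q.1 * q.2 * (q.1 - q.2)) by ring]
      rw [abs_neg]
      exact hle
    · rw [Lmap_apply, Prod.ext_iff]; exact ⟨by ring, by ring⟩
  · rintro ⟨p, ⟨hu, hv, hle⟩, rfl⟩
    rw [Lmap_apply]
    refine ⟨?_, by simp; linarith, by simp; linarith⟩
    show |(1*p.1+0*p.2) * (1*p.1+1*p.2) * ((1*p.1+0*p.2) - (1*p.1+1*p.2))| ≤ 1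
    rw [show (1*p.1+0*p.2) * (1*p.1+1*p.2) * ((1*p.1+0*p.2) - (1*p.1+1*p.2))
      = -(p.1 * p.2 * (p.1 + p.2)) by ring]
    rw [abs_neg]
    exact hle

lemma sec3 : Rset ∩ {p | p.1 < 0 ∧ 0 < p.2} = Lmap (-1) 0 0 1 '' Wset := by
  ext q
  constructor
  · rintro ⟨hle, h1, h2⟩
    refine ⟨(-q.1, q.2), ⟨by simp; linarith, by simp; linarith, ?_⟩, ?_⟩
    · rw [show ((-q.1, q.2)).1 * ((-q.1, q.2)).2 * (((-q.1, q.2)).1 + ((-q.1, q.2)).2)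
        = (q.1 * q.2 * (q.1 - q.2)) by ring]
      exact hle
    · rw [Lmap_apply, Prod.ext_iff]; exact ⟨by ring, by ring⟩
  · rintro ⟨p, ⟨hu, hv, hle⟩, rfl⟩
    rw [Lmap_apply]
    refine ⟨?_, by simp; linarith, by simp; linarith⟩
    show |((-1)*p.1+0*p.2) * (0*p.1+1*p.2) * (((-1)*p.1+0*p.2) - (0*p.1+1*p.2))| ≤ 1
    rw [show ((-1)*p.1+0*p.2) * (0*p.1+1*p.2) * (((-1)*p.1+0*p.2) - (0*p.1+1*p.2))
      = (p.1 * p.2 * (p.1 + p.2)) by ring]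
    exact hle

lemma sec4 : Rset ∩ {p | p.1 < p.2 ∧ p.2 < 0} = Lmap (-1) (-1) (-1) 0 '' Wset := by
  ext q
  constructor
  · rintro ⟨hle, h1, h2⟩
    refine ⟨(-q.2, q.2 - q.1), ⟨by simp; linarith, by simp; linarith, ?_⟩, ?_⟩
    · rw [show ((-q.2, q.2 - q.1)).1 * ((-q.2, q.2 - q.1)).2 * (((-q.2, q.2 - q.1)).1 + ((-q.2, q.2 - q.1)).2)
        = -(q.1 * q.2 * (q.1 - q.2)) by ring]
      rw [abs_neg]
      exact hle
    · rw [Lmap_apply, Prod.ext_iff]; exact ⟨by ring, by ring⟩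
  · rintro ⟨p, ⟨hu, hv, hle⟩, rfl⟩
    rw [Lmap_apply]
    refine ⟨?_, by simp; linarith, by simp; linarith⟩
    show |((-1)*p.1+(-1)*p.2) * ((-1)*p.1+0*p.2) * (((-1)*p.1+(-1)*p.2) - ((-1)*p.1+0*p.2))| ≤ 1
    rw [show ((-1)*p.1+(-1)*p.2) * ((-1)*p.1+0*p.2) * (((-1)*p.1+(-1)*p.2) - ((-1)*p.1+0*p.2))
      = -(p.1 * p.2 * (p.1 + p.2)) by ring]
    rw [abs_neg]
    exact hle

lemma sec5 : Rset ∩ {p | p.2 < p.1 ∧ p.1 < 0} = Lmap (-1) 0 (-1) (-1) '' Wset := by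
  ext q
  constructor
  · rintro ⟨hle, h1, h2⟩
    refine ⟨(-q.1, q.1 - q.2), ⟨by simp; linarith, by simp; linarith, ?_⟩, ?_⟩
    · rw [show ((-q.1, q.1 - q.2)).1 * ((-q.1, q.1 - q.2)).2 * (((-q.1, q.1 - q.2)).1 + ((-q.1, q.1 - q.2)).2)
        = (q.1 * q.2 * (q.1 - q.2)) by ring]
      exact hle
    · rw [Lmap_apply, Prod.ext_iff]; exact ⟨by ring, by ring⟩
  · rintro ⟨p, ⟨hu, hv, hle⟩, rfl⟩
    rw [Lmap_apply]
    refine ⟨?_, by simp; linarith, by simp; linarith⟩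
    show |((-1)*p.1+0*p.2) * ((-1)*p.1+(-1)*p.2) * (((-1)*p.1+0*p.2) - ((-1)*p.1+(-1)*p.2))| ≤ 1
    rw [show ((-1)*p.1+0*p.2) * ((-1)*p.1+(-1)*p.2) * (((-1)*p.1+0*p.2) - ((-1)*p.1+(-1)*p.2))
      = (p.1 * p.2 * (p.1 + p.2)) by ring]
    exact hle

lemma sec6 : Rset ∩ {p | p.2 < 0 ∧ 0 < p.1} = Lmap 1 0 0 (-1) '' Wset := by
  ext q
  constructor
  · rintro ⟨hle, h1, h2⟩
    refine ⟨(q.1, -q.2), ⟨by simp; linarith, by simp; linarith, ?_⟩, ?_⟩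
    · rw [show ((q.1, -q.2)).1 * ((q.1, -q.2)).2 * (((q.1, -q.2)).1 + ((q.1, -q.2)).2)
        = -(q.1 * q.2 * (q.1 - q.2)) by ring]
      rw [abs_neg]
      exact hle
    · rw [Lmap_apply, Prod.ext_iff]; exact ⟨by ring, by ring⟩
  · rintro ⟨p, ⟨hu, hv, hle⟩, rfl⟩
    rw [Lmap_apply]
    refine ⟨?_, by simp; linarith, by simp; linarith⟩
    show |(1*p.1+0*p.2) * (0*p.1+(-1)*p.2) * ((1*p.1+0*p.2) - (0*p.1+(-1)*p.2))| ≤ 1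
    rw [show (1*p.1+0*p.2) * (0*p.1+(-1)*p.2) * ((1*p.1+0*p.2) - (0*p.1+(-1)*p.2))
      = -(p.1 * p.2 * (p.1 + p.2)) by ring]
    rw [abs_neg]
    exact hle

lemma measurableSet_Rset : MeasurableSet Rset :=
  measurableSet_le (by fun_prop) measurable_const

lemma vol_lines : volume {p : ℝ × ℝ | p.1 = 0 ∨ p.2 = 0 ∨ p.1 = p.2} = 0 := by
  have hA : volume {p : ℝ × ℝ | p.1 = 0} = 0 := by
    have h : {p : ℝ × ℝ | p.1 = 0} = ({0} : Set ℝ) ×ˢ (Set.univ : Set ℝ) := by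
      ext p; constructor
      · intro hp; exact ⟨hp, trivial⟩
      · intro hp; exact hp.1
    rw [h, Measure.volume_eq_prod, Measure.prod_prod]; simp
  have hB : volume {p : ℝ × ℝ | p.2 = 0} = 0 := by
    have h : {p : ℝ × ℝ | p.2 = 0} = (Set.univ : Set ℝ) ×ˢ ({0} : Set ℝ) := by
      ext p; constructor
      · intro hp; exact ⟨trivial, hp⟩
      · intro hp; exact hp.2
    rw [h, Measure.volume_eq_prod, Measure.prod_prod]; simp
  have hC : volume {p : ℝ × ℝ | p.1 = p.2} = 0 := by
    have h : {p : ℝ × ℝ | p.1 = p.2} = Lmap 1 0 1 1 '' {p : ℝ × ℝ | p.2 = 0} := by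
      ext p
      constructor
      · intro hp
        exact ⟨(p.1, 0), rfl, by rw [Lmap_apply, Prod.ext_iff]
                                 exact ⟨by ring, by simpa using hp⟩⟩
      · rintro ⟨q, hq, rfl⟩
        rw [Lmap_apply]
        simp only [Set.mem_setOf_eq] at hq ⊢
        rw [hq]; ring
    rw [h, vol_Lmap_image 1 0 1 1 (by norm_num), hB]
  have : {p : ℝ × ℝ | p.1 = 0 ∨ p.2 = 0 ∨ p.1 = p.2}
      = {p : ℝ × ℝ | p.1 = 0} ∪ ({p : ℝ × ℝ | p.2 = 0} ∪ {p : ℝ × ℝ | p.1 = p.2}) := by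
    ext p; simp [Set.mem_union]
  rw [this]
  exact measure_union_null hA (measure_union_null hB hC)

set_option maxHeartbeats 2000000 in
/-- The area of the plane region `{(x,y) : |x·y·(x-y)| ≤ 1}` is exactly `3·B(1/3,1/3)`. -/
theorem area_xy_x_sub_y :
    volume {p : ℝ × ℝ | |p.1 * p.2 * (p.1 - p.2)| ≤ 1}
      = ENNReal.ofReal (3 * Beta (1/3) (1/3)) := by
  have hG1 : 0 < Real.Gamma (1/3) := Real.Gamma_pos_of_pos (by norm_num)
  have hG2 : 0 < Real.Gamma (1/3 + 1/3) := Real.Gamma_pos_of_pos (by norm_num)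
  have hB : 0 ≤ Beta (1/3) (1/3) := by unfold Beta; positivity
  have hB2 : 0 ≤ Beta (1/3) (1/3) / 2 := by linarith
  have m1 : MeasurableSet (Rset ∩ {p : ℝ × ℝ | 0 < p.2 ∧ p.2 < p.1}) :=
    measurableSet_Rset.inter ((measurableSet_lt measurable_const measurable_snd).inter (measurableSet_lt measurable_snd measurable_fst))
  have m2 : MeasurableSet (Rset ∩ {p : ℝ × ℝ | 0 < p.1 ∧ p.1 < p.2}) :=
    measurableSet_Rset.inter ((measurableSet_lt measurable_const measurable_fst).inter (measurableSet_lt measurable_fst measurable_snd))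
  have m3 : MeasurableSet (Rset ∩ {p : ℝ × ℝ | p.1 < 0 ∧ 0 < p.2}) :=
    measurableSet_Rset.inter ((measurableSet_lt measurable_fst measurable_const).inter (measurableSet_lt measurable_const measurable_snd))
  have m4 : MeasurableSet (Rset ∩ {p : ℝ × ℝ | p.1 < p.2 ∧ p.2 < 0}) :=
    measurableSet_Rset.inter ((measurableSet_lt measurable_fst measurable_snd).inter (measurableSet_lt measurable_snd measurable_const))
  have m5 : MeasurableSet (Rset ∩ {p : ℝ × ℝ | p.2 < p.1 ∧ p.1 < 0}) :=
    measurableSet_Rset.inter ((measurableSet_lt measurable_snd measurable_fst).inter (measurableSet_lt measurable_fst measurable_const))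
  have m6 : MeasurableSet (Rset ∩ {p : ℝ × ℝ | p.2 < 0 ∧ 0 < p.1}) :=
    measurableSet_Rset.inter ((measurableSet_lt measurable_snd measurable_const).inter (measurableSet_lt measurable_const measurable_fst))
  have v1 : volume (Rset ∩ {p : ℝ × ℝ | 0 < p.2 ∧ p.2 < p.1}) = ENNReal.ofReal (Beta (1/3) (1/3) / 2) := by
    rw [sec1, vol_Lmap_image _ _ _ _ (by norm_num), vol_Wset]
  have v2 : volume (Rset ∩ {p : ℝ × ℝ | 0 < p.1 ∧ p.1 < p.2}) = ENNReal.ofReal (Beta (1/3) (1/3) / 2) := by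
    rw [sec2, vol_Lmap_image _ _ _ _ (by norm_num), vol_Wset]
  have v3 : volume (Rset ∩ {p : ℝ × ℝ | p.1 < 0 ∧ 0 < p.2}) = ENNReal.ofReal (Beta (1/3) (1/3) / 2) := by
    rw [sec3, vol_Lmap_image _ _ _ _ (by norm_num), vol_Wset]
  have v4 : volume (Rset ∩ {p : ℝ × ℝ | p.1 < p.2 ∧ p.2 < 0}) = ENNReal.ofReal (Beta (1/3) (1/3) / 2) := by
    rw [sec4, vol_Lmap_image _ _ _ _ (by norm_num), vol_Wset]
  have v5 : volume (Rset ∩ {p : ℝ × ℝ | p.2 < p.1 ∧ p.1 < 0}) = ENNReal.ofReal (Beta (1/3) (1/3) / 2) := by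
    rw [sec5, vol_Lmap_image _ _ _ _ (by norm_num), vol_Wset]
  have v6 : volume (Rset ∩ {p : ℝ × ℝ | p.2 < 0 ∧ 0 < p.1}) = ENNReal.ofReal (Beta (1/3) (1/3) / 2) := by
    rw [sec6, vol_Lmap_image _ _ _ _ (by norm_num), vol_Wset]
  have d12 : Disjoint (Rset ∩ {p : ℝ × ℝ | 0 < p.2 ∧ p.2 < p.1}) (Rset ∩ {p : ℝ × ℝ | 0 < p.1 ∧ p.1 < p.2}) := by
    refine Set.disjoint_left.2 ?_
    rintro p ⟨-, hi1, hi2⟩ ⟨-, hj1, hj2⟩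
    linarith
  have d13 : Disjoint (Rset ∩ {p : ℝ × ℝ | 0 < p.2 ∧ p.2 < p.1}) (Rset ∩ {p : ℝ × ℝ | p.1 < 0 ∧ 0 < p.2}) := by
    refine Set.disjoint_left.2 ?_
    rintro p ⟨-, hi1, hi2⟩ ⟨-, hj1, hj2⟩
    linarith
  have d14 : Disjoint (Rset ∩ {p : ℝ × ℝ | 0 < p.2 ∧ p.2 < p.1}) (Rset ∩ {p : ℝ × ℝ | p.1 < p.2 ∧ p.2 < 0}) := by
    refine Set.disjoint_left.2 ?_
    rintro p ⟨-, hi1, hi2⟩ ⟨-, hj1, hj2⟩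
    linarith
  have d15 : Disjoint (Rset ∩ {p : ℝ × ℝ | 0 < p.2 ∧ p.2 < p.1}) (Rset ∩ {p : ℝ × ℝ | p.2 < p.1 ∧ p.1 < 0}) := by
    refine Set.disjoint_left.2 ?_
    rintro p ⟨-, hi1, hi2⟩ ⟨-, hj1, hj2⟩
    linarith
  have d16 : Disjoint (Rset ∩ {p : ℝ × ℝ | 0 < p.2 ∧ p.2 < p.1}) (Rset ∩ {p : ℝ × ℝ | p.2 < 0 ∧ 0 < p.1}) := by
    refine Set.disjoint_left.2 ?_
    rintro p ⟨-, hi1, hi2⟩ ⟨-, hj1, hj2⟩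
    linarith
  have d23 : Disjoint (Rset ∩ {p : ℝ × ℝ | 0 < p.1 ∧ p.1 < p.2}) (Rset ∩ {p : ℝ × ℝ | p.1 < 0 ∧ 0 < p.2}) := by
    refine Set.disjoint_left.2 ?_
    rintro p ⟨-, hi1, hi2⟩ ⟨-, hj1, hj2⟩
    linarith
  have d24 : Disjoint (Rset ∩ {p : ℝ × ℝ | 0 < p.1 ∧ p.1 < p.2}) (Rset ∩ {p : ℝ × ℝ | p.1 < p.2 ∧ p.2 < 0}) := by
    refine Set.disjoint_left.2 ?_
    rintro p ⟨-, hi1, hi2⟩ ⟨-, hj1, hj2⟩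
    linarith
  have d25 : Disjoint (Rset ∩ {p : ℝ × ℝ | 0 < p.1 ∧ p.1 < p.2}) (Rset ∩ {p : ℝ × ℝ | p.2 < p.1 ∧ p.1 < 0}) := by
    refine Set.disjoint_left.2 ?_
    rintro p ⟨-, hi1, hi2⟩ ⟨-, hj1, hj2⟩
    linarith
  have d26 : Disjoint (Rset ∩ {p : ℝ × ℝ | 0 < p.1 ∧ p.1 < p.2}) (Rset ∩ {p : ℝ × ℝ | p.2 < 0 ∧ 0 < p.1}) := by
    refine Set.disjoint_left.2 ?_
    rintro p ⟨-, hi1, hi2⟩ ⟨-, hj1, hj2⟩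
    linarith
  have d34 : Disjoint (Rset ∩ {p : ℝ × ℝ | p.1 < 0 ∧ 0 < p.2}) (Rset ∩ {p : ℝ × ℝ | p.1 < p.2 ∧ p.2 < 0}) := by
    refine Set.disjoint_left.2 ?_
    rintro p ⟨-, hi1, hi2⟩ ⟨-, hj1, hj2⟩
    linarith
  have d35 : Disjoint (Rset ∩ {p : ℝ × ℝ | p.1 < 0 ∧ 0 < p.2}) (Rset ∩ {p : ℝ × ℝ | p.2 < p.1 ∧ p.1 < 0}) := by
    refine Set.disjoint_left.2 ?_
    rintro p ⟨-, hi1, hi2⟩ ⟨-, hj1, hj2⟩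
    linarith
  have d36 : Disjoint (Rset ∩ {p : ℝ × ℝ | p.1 < 0 ∧ 0 < p.2}) (Rset ∩ {p : ℝ × ℝ | p.2 < 0 ∧ 0 < p.1}) := by
    refine Set.disjoint_left.2 ?_
    rintro p ⟨-, hi1, hi2⟩ ⟨-, hj1, hj2⟩
    linarith
  have d45 : Disjoint (Rset ∩ {p : ℝ × ℝ | p.1 < p.2 ∧ p.2 < 0}) (Rset ∩ {p : ℝ × ℝ | p.2 < p.1 ∧ p.1 < 0}) := by
    refine Set.disjoint_left.2 ?_
    rintro p ⟨-, hi1, hi2⟩ ⟨-, hj1, hj2⟩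
    linarith
  have d46 : Disjoint (Rset ∩ {p : ℝ × ℝ | p.1 < p.2 ∧ p.2 < 0}) (Rset ∩ {p : ℝ × ℝ | p.2 < 0 ∧ 0 < p.1}) := by
    refine Set.disjoint_left.2 ?_
    rintro p ⟨-, hi1, hi2⟩ ⟨-, hj1, hj2⟩
    linarith
  have d56 : Disjoint (Rset ∩ {p : ℝ × ℝ | p.2 < p.1 ∧ p.1 < 0}) (Rset ∩ {p : ℝ × ℝ | p.2 < 0 ∧ 0 < p.1}) := by
    refine Set.disjoint_left.2 ?_
    rintro p ⟨-, hi1, hi2⟩ ⟨-, hj1, hj2⟩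
    linarith
  set U : Set (ℝ × ℝ) := (Rset ∩ {p : ℝ × ℝ | 0 < p.2 ∧ p.2 < p.1}) ∪ ((Rset ∩ {p : ℝ × ℝ | 0 < p.1 ∧ p.1 < p.2}) ∪ ((Rset ∩ {p : ℝ × ℝ | p.1 < 0 ∧ 0 < p.2}) ∪ ((Rset ∩ {p : ℝ × ℝ | p.1 < p.2 ∧ p.2 < 0}) ∪ ((Rset ∩ {p : ℝ × ℝ | p.2 < p.1 ∧ p.1 < 0}) ∪ (Rset ∩ {p : ℝ × ℝ | p.2 < 0 ∧ 0 < p.1}))))) with hU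
  have hUR : U ⊆ Rset := by
    rw [hU]
    refine Set.union_subset Set.inter_subset_left (Set.union_subset Set.inter_subset_left
      (Set.union_subset Set.inter_subset_left (Set.union_subset Set.inter_subset_left
      (Set.union_subset Set.inter_subset_left Set.inter_subset_left))))
  have hcover : Rset ⊆ {p : ℝ × ℝ | p.1 = 0 ∨ p.2 = 0 ∨ p.1 = p.2} ∪ U := by
    intro p hp
    by_cases h1 : p.1 = 0
    · exact Or.inl (Or.inl h1)
    by_cases h2 : p.2 = 0
    · exact Or.inl (Or.inr (Or.inl h2))
    by_cases h3 : p.1 = p.2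
    · exact Or.inl (Or.inr (Or.inr h3))
    right
    rw [hU]
    simp only [Set.mem_union, Set.mem_inter_iff, Set.mem_setOf_eq]
    rcases lt_or_gt_of_ne h1 with hx | hx <;> rcases lt_or_gt_of_ne h2 with hy | hy <;>
      rcases lt_or_gt_of_ne h3 with hxy | hxy
    all_goals first
      | (exfalso; linarith)
      | tauto
  have hvol : volume Rset = volume U := by
    refine le_antisymm ?_ (measure_mono hUR)
    calc volume Rset ≤ volume ({p : ℝ × ℝ | p.1 = 0 ∨ p.2 = 0 ∨ p.1 = p.2} ∪ U) :=
          measure_mono hcover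
      _ ≤ volume {p : ℝ × ℝ | p.1 = 0 ∨ p.2 = 0 ∨ p.1 = p.2} + volume U := measure_union_le _ _
      _ = volume U := by rw [vol_lines, zero_add]
  have hvolU : volume U = ENNReal.ofReal (Beta (1/3) (1/3) / 2)
      + (ENNReal.ofReal (Beta (1/3) (1/3) / 2) + (ENNReal.ofReal (Beta (1/3) (1/3) / 2)
      + (ENNReal.ofReal (Beta (1/3) (1/3) / 2) + (ENNReal.ofReal (Beta (1/3) (1/3) / 2)
      + ENNReal.ofReal (Beta (1/3) (1/3) / 2))))) := by
    rw [hU]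
    rw [measure_union (Set.disjoint_union_right.2 ⟨d12, Set.disjoint_union_right.2 ⟨d13,
        Set.disjoint_union_right.2 ⟨d14, Set.disjoint_union_right.2 ⟨d15, d16⟩⟩⟩⟩)
        (m2.union (m3.union (m4.union (m5.union m6))))]
    rw [measure_union (Set.disjoint_union_right.2 ⟨d23, Set.disjoint_union_right.2 ⟨d24,
        Set.disjoint_union_right.2 ⟨d25, d26⟩⟩⟩) (m3.union (m4.union (m5.union m6)))]
    rw [measure_union (Set.disjoint_union_right.2 ⟨d34, Set.disjoint_union_right.2 ⟨d35, d36⟩⟩)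
        (m4.union (m5.union m6))]
    rw [measure_union (Set.disjoint_union_right.2 ⟨d45, d46⟩) (m5.union m6)]
    rw [measure_union d56 m6]
    rw [v1, v2, v3, v4, v5, v6]
  show volume Rset = ENNReal.ofReal (3 * Beta (1/3) (1/3))
  rw [hvol, hvolU,
    show (3 : ℝ) * Beta (1/3) (1/3) = Beta (1/3) (1/3) / 2 + (Beta (1/3) (1/3) / 2
      + (Beta (1/3) (1/3) / 2 + (Beta (1/3) (1/3) / 2 + (Beta (1/3) (1/3) / 2
      + Beta (1/3) (1/3) / 2)))) by ring]
  rw [ENNReal.ofReal_add hB2 (by linarith), ENNReal.ofReal_add hB2 (by linarith),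
    ENNReal.ofReal_add hB2 (by linarith), ENNReal.ofReal_add hB2 (by linarith),
    ENNReal.ofReal_add hB2 hB2]
end

section
/- For n ≥ 3 let M_n denote the supremum of |D_F|^{1/(n(n−1))} · A_F over all binary forms F of degree n with complex coefficients and non-zero discriminant. Then the sequence {M_n} is decreasing: M_{n+1} ≤ M_n for all n ≥ 3. -/
open MeasureTheory Finset
open scoped ENNReal

/-- The discriminant `∏_{i<j} (α_i β_j - α_j β_i)²` of the binary form
`F(X,Y) = ∏ i, (α i • X - β i • Y)`. -/
noncomputable def discPair {n : ℕ} (α β : Fin n → ℂ) : ℂ :=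
  ∏ i : Fin n, ∏ j ∈ Finset.Ioi i, (α i * β j - α j * β i) ^ 2

/-- The area of the region `{(x,y) ∈ ℝ² : |F(x,y)| ≤ 1}` for the binary form
`F(X,Y) = ∏ i, (α i • X - β i • Y)` with complex coefficients. -/
noncomputable def areaPair {n : ℕ} (α β : Fin n → ℂ) : ℝ≥0∞ :=
  volume {p : ℝ × ℝ | ‖∏ i, (α i * (p.1 : ℂ) - β i * (p.2 : ℂ))‖ ≤ 1}

/-- `M n` is the supremum of `|D_F|^(1/(n(n-1))) · A_F` over all binary forms `F` of
degree `n` with complex coefficients and nonzero discriminant. -/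
noncomputable def Mseq (n : ℕ) : ℝ≥0∞ :=
  ⨆ (α : Fin n → ℂ) (β : Fin n → ℂ) (_ : discPair α β ≠ 0),
    ENNReal.ofReal (‖discPair α β‖ ^ ((1 : ℝ) / ((n : ℝ) * ((n : ℝ) - 1))))
      * areaPair α β

open Real Set

/-! ### Auxiliary lemmas -/

theorem MseqAux.lintegral_comp_polarCoord_symm' (f : ℝ × ℝ → ℝ≥0∞) :
    (∫⁻ p in polarCoord.target, ENNReal.ofReal p.1 * f (polarCoord.symm p)) = ∫⁻ p, f p := by
  set B : ℝ × ℝ → ℝ × ℝ →L[ℝ] ℝ × ℝ := fun p =>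
    LinearMap.toContinuousLinearMap (Matrix.toLin (Module.Basis.finTwoProd ℝ) (Module.Basis.finTwoProd ℝ)
      !![Real.cos p.2, -p.1 * Real.sin p.2; Real.sin p.2, p.1 * Real.cos p.2])
  have A : ∀ p ∈ polarCoord.target, HasFDerivWithinAt polarCoord.symm (B p) polarCoord.target p :=
    fun p _ => (hasFDerivAt_polarCoord_symm p).hasFDerivWithinAt
  have B_det : ∀ p, (B p).det = p.1 := by
    intro p
    conv_rhs => rw [← one_mul p.1, ← Real.cos_sq_add_sin_sq p.2]
    simp only [B, neg_mul, LinearMap.det_toContinuousLinearMap, LinearMap.det_toLin,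
      Matrix.det_fin_two_of, sub_neg_eq_add]
    ring
  have hinj : Set.InjOn polarCoord.symm polarCoord.target := by
    have := polarCoord.symm.injOn
    rwa [OpenPartialHomeomorph.symm_source] at this
  symm
  calc
    ∫⁻ p, f p = ∫⁻ p in polarCoord.source, f p := by
      rw [← setLIntegral_univ]
      exact (setLIntegral_congr polarCoord_source_ae_eq_univ.symm)
    _ = ∫⁻ p in polarCoord.symm '' polarCoord.target, f p := by
      rw [polarCoord.symm_image_target_eq_source]
    _ = ∫⁻ p in polarCoord.target, ENNReal.ofReal |(B p).det| * f (polarCoord.symm p) := by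
      exact lintegral_image_eq_lintegral_abs_det_fderiv_mul volume
        polarCoord.open_target.measurableSet A hinj f
    _ = ∫⁻ p in polarCoord.target, ENNReal.ofReal p.1 * f (polarCoord.symm p) := by
      apply setLIntegral_congr_fun polarCoord.open_target.measurableSet
      intro x hx
      beta_reduce
      rw [B_det, abs_of_pos]
      exact hx.1

theorem MseqAux.inner_radial (m : ℕ) (hm : 0 < m) (c : ℝ) (hc : 0 ≤ c) :
    (∫⁻ r in Set.Ioi (0:ℝ),
        ENNReal.ofReal r * ({r : ℝ | r ^ m * c ≤ 1}.indicator (1 : ℝ → ℝ≥0∞) r))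
      = (ENNReal.ofReal c) ^ (-2 / (m:ℝ)) / 2 := by
  have hmR : (0:ℝ) < m := Nat.cast_pos.2 hm
  have hsm : MeasurableSet {r : ℝ | r ^ m * c ≤ 1} :=
    measurableSet_le (by fun_prop) measurable_const
  have hrw : ∀ r : ℝ, ENNReal.ofReal r * ({r : ℝ | r ^ m * c ≤ 1}.indicator 1 r)
      = {r : ℝ | r ^ m * c ≤ 1}.indicator (fun r => ENNReal.ofReal r) r := by
    intro r
    by_cases h : r ∈ {r : ℝ | r ^ m * c ≤ 1} <;> simp [h]
  simp_rw [hrw]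
  rw [lintegral_indicator hsm, Measure.restrict_restrict hsm]
  rcases eq_or_lt_of_le hc with rfl | hc'
  · have h1 : {r : ℝ | r ^ m * (0:ℝ) ≤ 1} ∩ Set.Ioi 0 = Set.Ioi 0 := by
      ext r; simp
    rw [h1]
    have h2 : (∫⁻ r in Set.Ioi (1:ℝ), (1:ℝ≥0∞)) ≤ ∫⁻ r in Set.Ioi (0:ℝ), ENNReal.ofReal r := by
      refine le_trans ?_ (lintegral_mono_set (by norm_num : Set.Ioi (1:ℝ) ⊆ Set.Ioi 0))
      refine setLIntegral_mono (by fun_prop) ?_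
      intro x hx
      exact ENNReal.one_le_ofReal.2 (le_of_lt hx)
    rw [setLIntegral_one, Real.volume_Ioi] at h2
    have hneg : -2 / (m:ℝ) < 0 := div_neg_of_neg_of_pos (by norm_num) hmR
    rw [eq_comm, ENNReal.ofReal_zero, ENNReal.zero_rpow_of_neg hneg, top_le_iff.1 h2]
    simp [ENNReal.div_eq_top]
  · set R : ℝ := c ^ (-1 / (m:ℝ)) with hRdef
    have hR : 0 < R := Real.rpow_pos_of_pos hc' _
    have hset : {r : ℝ | r ^ m * c ≤ 1} ∩ Set.Ioi 0 = Set.Ioc 0 R := by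
      ext r
      simp only [Set.mem_inter_iff, Set.mem_setOf_eq, Set.mem_Ioi, Set.mem_Ioc]
      constructor
      · rintro ⟨h1, h2⟩
        refine ⟨h2, ?_⟩
        have hrm : r ^ m ≤ R ^ m := by
          rw [hRdef, ← Real.rpow_natCast (c ^ (-1/(m:ℝ))) m, ← Real.rpow_mul hc]
          rw [div_mul_cancel₀ (-1) (ne_of_gt hmR), Real.rpow_neg_one]
          rw [← le_div_iff₀ hc'] at h1
          simpa [one_div] using h1
        exact le_of_pow_le_pow_left₀ (Nat.pos_iff_ne_zero.1 hm) hR.le hrm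
      · rintro ⟨h1, h2⟩
        refine ⟨?_, h1⟩
        have hrm : r ^ m ≤ R ^ m := pow_le_pow_left₀ h1.le h2 m
        have hRm : R ^ m = c⁻¹ := by
          rw [hRdef, ← Real.rpow_natCast (c ^ (-1/(m:ℝ))) m, ← Real.rpow_mul hc,
            div_mul_cancel₀ (-1) (ne_of_gt hmR), Real.rpow_neg_one]
        rw [hRm] at hrm
        calc r ^ m * c ≤ c⁻¹ * c := by apply mul_le_mul_of_nonneg_right hrm hc
        _ = 1 := inv_mul_cancel₀ (ne_of_gt hc')
    rw [hset]
    have hInt : (∫⁻ r in Set.Ioc (0:ℝ) R, ENNReal.ofReal r) = ENNReal.ofReal (R ^ 2 / 2) := by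
      rw [← ofReal_integral_eq_lintegral_ofReal]
      · congr 1
        rw [← intervalIntegral.integral_of_le hR.le, integral_id]
        norm_num
      · exact (continuous_id.integrableOn_Ioc)
      · exact ae_restrict_of_forall_mem measurableSet_Ioc fun x hx => le_of_lt hx.1
    rw [hInt, ENNReal.ofReal_rpow_of_pos hc']
    have : c ^ (-2 / (m:ℝ)) = R ^ 2 := by
      rw [hRdef, ← Real.rpow_natCast (c ^ (-1/(m:ℝ))) 2, ← Real.rpow_mul hc]
      norm_num
      ring_nf
    rw [this, ENNReal.ofReal_div_of_pos (by norm_num), ENNReal.ofReal_ofNat]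

theorem MseqAux.areaPair_eq {m : ℕ} (hm : 0 < m) (α β : Fin m → ℂ) :
    areaPair α β = (∫⁻ θ in Set.Ioo (-π) π,
      ∏ i, (ENNReal.ofReal (‖α i * (Real.cos θ : ℂ) - β i * (Real.sin θ : ℂ)‖))
        ^ (-2/(m:ℝ))) / 2 := by
  classical
  set S : Set (ℝ × ℝ) :=
    {p : ℝ × ℝ | ‖∏ i, (α i * (p.1 : ℂ) - β i * (p.2 : ℂ))‖ ≤ 1} with hSdef
  set w : ℝ → ℝ := fun θ => ∏ i, ‖α i * (Real.cos θ : ℂ) - β i * (Real.sin θ : ℂ)‖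
    with hwdef
  have hw0 : ∀ θ, 0 ≤ w θ := fun θ =>
    Finset.prod_nonneg fun i _ => norm_nonneg _
  have hS : MeasurableSet S := by
    have hc : Continuous fun p : ℝ × ℝ => ‖∏ i, (α i * (p.1 : ℂ) - β i * (p.2 : ℂ))‖ :=
      continuous_norm.comp (by fun_prop)
    exact measurableSet_le hc.measurable measurable_const
  have h1 : areaPair α β = ∫⁻ p, S.indicator 1 p := (lintegral_indicator_one hS).symm
  rw [h1, ← MseqAux.lintegral_comp_polarCoord_symm' _]
  have htarget : polarCoord.target = Set.Ioi (0:ℝ) ×ˢ Set.Ioo (-π) π := rfl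
  have hsymm : Measurable fun p : ℝ × ℝ => polarCoord.symm p := by
    have : (fun p : ℝ × ℝ => polarCoord.symm p)
        = fun p : ℝ × ℝ => (p.1 * Real.cos p.2, p.1 * Real.sin p.2) := rfl
    rw [this]; fun_prop
  have hg : Measurable fun p : ℝ × ℝ => ENNReal.ofReal p.1 * S.indicator 1 (polarCoord.symm p) :=
    (measurable_fst.ennreal_ofReal).mul ((measurable_one.indicator hS).comp hsymm)
  rw [htarget, Measure.volume_eq_prod, ← Measure.prod_restrict,
    lintegral_prod_symm _ hg.aemeasurable]
  have hinner : ∀ θ : ℝ,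
      (∫⁻ r in Set.Ioi (0:ℝ), ENNReal.ofReal r * S.indicator 1 (polarCoord.symm (r, θ)))
        = (∏ i, (ENNReal.ofReal (‖α i * (Real.cos θ : ℂ) - β i * (Real.sin θ : ℂ)‖))
            ^ (-2/(m:ℝ))) / 2 := by
    intro θ
    have step1 : (∫⁻ r in Set.Ioi (0:ℝ), ENNReal.ofReal r * S.indicator 1 (polarCoord.symm (r, θ)))
        = ∫⁻ r in Set.Ioi (0:ℝ),
            ENNReal.ofReal r * ({r : ℝ | r ^ m * w θ ≤ 1}.indicator (1 : ℝ → ℝ≥0∞) r) := by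
      apply setLIntegral_congr_fun measurableSet_Ioi
      intro r hr
      beta_reduce
      have hmem : polarCoord.symm (r, θ) ∈ S ↔ r ^ m * w θ ≤ 1 := by
        have hps : polarCoord.symm (r, θ) = (r * Real.cos θ, r * Real.sin θ) := rfl
        rw [hps, hSdef]
        simp only [Set.mem_setOf_eq]
        have hprod : ∏ i, (α i * ((r * Real.cos θ : ℝ) : ℂ) - β i * ((r * Real.sin θ : ℝ) : ℂ))
            = (r : ℂ) ^ m * ∏ i, (α i * (Real.cos θ : ℂ) - β i * (Real.sin θ : ℂ)) := by
          rw [Finset.prod_congr rfl (fun i _ =>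
            show (α i * ((r * Real.cos θ : ℝ) : ℂ) - β i * ((r * Real.sin θ : ℝ) : ℂ))
              = (r:ℂ) * (α i * (Real.cos θ : ℂ) - β i * (Real.sin θ : ℂ)) by push_cast; ring)]
          rw [Finset.prod_mul_distrib, Finset.prod_const, Finset.card_univ, Fintype.card_fin]
        rw [hprod, norm_mul, norm_pow, Complex.norm_real, Real.norm_eq_abs, abs_of_pos hr, norm_prod]
      by_cases h : r ∈ {r : ℝ | r ^ m * w θ ≤ 1}
      · rw [Set.indicator_of_mem (hmem.2 h), Set.indicator_of_mem h]; rfl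
      · rw [Set.indicator_of_notMem (fun hh => h (hmem.1 hh)), Set.indicator_of_notMem h]
    rw [step1, MseqAux.inner_radial m hm (w θ) (hw0 θ), hwdef]
    congr 1
    rw [ENNReal.ofReal_prod_of_nonneg (fun i _ => norm_nonneg _),
      ← ENNReal.prod_rpow_of_ne_top (fun i _ => ENNReal.ofReal_ne_top) (-2/(m:ℝ))]
  simp_rw [hinner]
  simp_rw [div_eq_mul_inv]
  rw [lintegral_mul_const' _ _ (by norm_num)]

theorem MseqAux.prod_Ioi_succAbove {M : Type*} [CommMonoid M] {n : ℕ}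
    (F : Fin (n+1) → Fin (n+1) → M) (k : Fin (n+1)) :
    (∏ i : Fin n, ∏ j ∈ Finset.Ioi i, F (k.succAbove i) (k.succAbove j))
      = ∏ a : Fin (n+1), ∏ b ∈ Finset.Ioi a, (if a ≠ k ∧ b ≠ k then F a b else 1) := by
  classical
  rw [Finset.prod_sigma', Finset.prod_sigma']
  rw [show (∏ x ∈ (Finset.univ.sigma fun a : Fin (n+1) => Finset.Ioi a),
      (if x.1 ≠ k ∧ x.2 ≠ k then F x.1 x.2 else 1))
    = ∏ x ∈ (Finset.univ.sigma fun a : Fin (n+1) => Finset.Ioi a).filter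
        (fun x => x.1 ≠ k ∧ x.2 ≠ k), F x.1 x.2 from (Finset.prod_filter _ _).symm]
  refine Finset.prod_nbij (fun x => ⟨k.succAbove x.1, k.succAbove x.2⟩) ?_ ?_ ?_ ?_
  · intro x hx
    simp only [Finset.mem_sigma, Finset.mem_univ, Finset.mem_Ioi, true_and] at hx
    simp only [Finset.mem_filter, Finset.mem_sigma, Finset.mem_univ, Finset.mem_Ioi, true_and]
    exact ⟨(Fin.strictMono_succAbove k) hx, Fin.succAbove_ne k x.1, Fin.succAbove_ne k x.2⟩
  · intro x _ y _ hxy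
    have e1 : k.succAbove x.1 = k.succAbove y.1 := congrArg Sigma.fst hxy
    have e2 : k.succAbove x.2 = k.succAbove y.2 :=
      congrArg (fun s : (_ : Fin (n+1)) × Fin (n+1) => s.2) hxy
    exact Sigma.ext (Fin.succAbove_right_injective e1)
      (heq_of_eq (Fin.succAbove_right_injective e2))
  · intro z hz
    simp only [Finset.coe_filter, Finset.mem_sigma, Finset.mem_univ, Finset.mem_Ioi, true_and,
      Set.mem_setOf_eq] at hz
    obtain ⟨hlt, hz1, hz2⟩ := hz
    obtain ⟨a, ha⟩ := Fin.exists_succAbove_eq hz1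
    obtain ⟨b, hb⟩ := Fin.exists_succAbove_eq hz2
    refine ⟨⟨a, b⟩, ?_, ?_⟩
    · simp only [Finset.coe_sigma, Set.mem_sigma_iff, Finset.mem_coe, Finset.mem_univ,
        Finset.mem_Ioi, true_and]
      exact (Fin.strictMono_succAbove k).lt_iff_lt.1 (by rw [ha, hb]; exact hlt)
    · exact Sigma.ext ha (heq_of_eq hb)
  · intro x _; rfl

theorem MseqAux.discPair_comp {n : ℕ} (α β : Fin (n+1) → ℂ) (k : Fin (n+1)) :
    discPair (α ∘ k.succAbove) (β ∘ k.succAbove)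
      = ∏ a : Fin (n+1), ∏ b ∈ Finset.Ioi a,
          (if a ≠ k ∧ b ≠ k then (α a * β b - α b * β a) ^ 2 else 1) :=
  MseqAux.prod_Ioi_succAbove (fun a b => (α a * β b - α b * β a) ^ 2) k

theorem MseqAux.discPair_prod {n : ℕ} (α β : Fin (n+1) → ℂ) :
    ∏ k : Fin (n+1), discPair (α ∘ k.succAbove) (β ∘ k.succAbove)
      = discPair α β ^ (n - 1) := by
  classical
  simp_rw [MseqAux.discPair_comp]
  rw [Finset.prod_comm]
  have step : ∀ a : Fin (n+1),
      (∏ b ∈ Finset.Ioi a, ∏ k : Fin (n+1),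
        (if a ≠ k ∧ b ≠ k then (α a * β b - α b * β a) ^ 2 else 1))
      = ∏ b ∈ Finset.Ioi a, ((α a * β b - α b * β a) ^ 2) ^ (n - 1) := by
    intro a
    refine Finset.prod_congr rfl fun b hb => ?_
    rw [← Finset.prod_filter]
    rw [Finset.prod_const]
    congr 1
    have hab : a ≠ b := ne_of_lt (Finset.mem_Ioi.1 hb)
    have hfil : Finset.univ.filter (fun k : Fin (n+1) => a ≠ k ∧ b ≠ k)
        = ({a, b} : Finset (Fin (n+1)))ᶜ := by
      ext x
      simp [eq_comm, not_or, and_comm]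
    rw [hfil, Finset.card_compl, Finset.card_insert_of_notMem (by simpa using hab),
      Finset.card_singleton, Fintype.card_fin]
    omega
  have swap : (∏ a : Fin (n+1), ∏ k : Fin (n+1), ∏ b ∈ Finset.Ioi a,
        (if a ≠ k ∧ b ≠ k then (α a * β b - α b * β a) ^ 2 else 1))
      = ∏ a : Fin (n+1), ∏ b ∈ Finset.Ioi a, ∏ k : Fin (n+1),
        (if a ≠ k ∧ b ≠ k then (α a * β b - α b * β a) ^ 2 else 1) :=
    Finset.prod_congr rfl fun a _ => Finset.prod_comm
  rw [swap]
  simp_rw [step]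
  rw [discPair]
  simp_rw [Finset.prod_pow]

theorem MseqAux.disc_factor_ne_zero {m : ℕ} {α β : Fin m → ℂ} (h : discPair α β ≠ 0)
    {i j : Fin m} (hij : i < j) : α i * β j - α j * β i ≠ 0 := by
  rw [discPair, Finset.prod_ne_zero_iff] at h
  have := h i (Finset.mem_univ i)
  rw [Finset.prod_ne_zero_iff] at this
  have := this j (Finset.mem_Ioi.2 hij)
  exact fun h0 => this (by rw [h0]; ring)

theorem MseqAux.discPair_comp_ne_zero {n : ℕ} {α β : Fin (n+1) → ℂ} (h : discPair α β ≠ 0)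
    (k : Fin (n+1)) : discPair (α ∘ k.succAbove) (β ∘ k.succAbove) ≠ 0 := by
  rw [discPair, Finset.prod_ne_zero_iff]
  intro i _
  rw [Finset.prod_ne_zero_iff]
  intro j hj
  apply pow_ne_zero
  exact MseqAux.disc_factor_ne_zero h ((Fin.strictMono_succAbove k) (Finset.mem_Ioi.1 hj))

theorem MseqAux.prod_succAbove_double {M : Type*} [CommMonoid M] {n : ℕ} (h : Fin (n+1) → M) :
    ∏ k : Fin (n+1), ∏ j : Fin n, h (k.succAbove j) = ∏ i : Fin (n+1), h i ^ n := by
  classical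
  have key : ∀ k : Fin (n+1), ∏ j : Fin n, h (k.succAbove j)
      = ∏ i ∈ Finset.univ.erase k, h i := by
    intro k
    refine Finset.prod_nbij k.succAbove ?_ ?_ ?_ (fun _ _ => rfl)
    · intro j _; exact Finset.mem_erase.2 ⟨Fin.succAbove_ne k j, Finset.mem_univ _⟩
    · intro x _ y _ hxy; exact Fin.succAbove_right_injective hxy
    · intro i hi
      simp only [Finset.coe_erase, Set.mem_diff, Finset.mem_coe, Finset.mem_univ, true_and,
        Set.mem_singleton_iff] at hi
      obtain ⟨j, hj⟩ := Fin.exists_succAbove_eq hi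
      exact ⟨j, by simp, hj⟩
  simp_rw [key]
  have step : ∀ k : Fin (n+1), (∏ i ∈ Finset.univ.erase k, h i)
      = ∏ i : Fin (n+1), (if i ≠ k then h i else 1) := by
    intro k
    rw [← Finset.filter_ne' Finset.univ k, Finset.prod_filter]
  simp_rw [step]
  rw [Finset.prod_comm]
  refine Finset.prod_congr rfl fun i _ => ?_
  rw [← Finset.prod_filter, Finset.prod_const]
  congr 1
  have hfil : Finset.univ.filter (fun k : Fin (n+1) => i ≠ k) = ({i} : Finset (Fin (n+1)))ᶜ := by
    ext x; simp [eq_comm]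
  rw [hfil, Finset.card_compl, Finset.card_singleton, Fintype.card_fin]
  omega

theorem MseqAux.pointwise_holder {n : ℕ} (hn : 0 < n) (G : Fin (n+1) → ℝ≥0∞) :
    ∏ i, G i ^ (-2/((n+1:ℕ):ℝ))
      = ∏ k : Fin (n+1), (∏ j : Fin n, G (k.succAbove j) ^ (-2/(n:ℝ))) ^ (1/((n+1:ℕ):ℝ)) := by
  have hnR : (0:ℝ) < n := Nat.cast_pos.2 hn
  have hmR : (0:ℝ) < ((n+1:ℕ):ℝ) := Nat.cast_pos.2 (by omega)
  set e : ℝ := (-2/(n:ℝ)) * (1/((n+1:ℕ):ℝ)) with he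
  symm
  calc ∏ k : Fin (n+1), (∏ j : Fin n, G (k.succAbove j) ^ (-2/(n:ℝ))) ^ (1/((n+1:ℕ):ℝ))
      = ∏ k : Fin (n+1), ∏ j : Fin n, (G (k.succAbove j)) ^ e := by
        refine Finset.prod_congr rfl fun k _ => ?_
        rw [← ENNReal.prod_rpow_of_nonneg (f := fun j => G (k.succAbove j) ^ (-2/(n:ℝ)))
          (by positivity : (0:ℝ) ≤ 1/((n+1:ℕ):ℝ))]
        exact Finset.prod_congr rfl fun j _ => (ENNReal.rpow_mul _ _ _).symm
    _ = ∏ i : Fin (n+1), (G i ^ e) ^ n := MseqAux.prod_succAbove_double (fun i => G i ^ e)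
    _ = ∏ i, G i ^ (-2/((n+1:ℕ):ℝ)) := by
        refine Finset.prod_congr rfl fun i _ => ?_
        rw [← ENNReal.rpow_natCast (G i ^ e) n, ← ENNReal.rpow_mul]
        congr 1
        rw [he]
        push_cast
        field_simp

/-- The sequence `{M_n}` is decreasing: `M_{n+1} ≤ M_n` for all `n ≥ 3`. -/
theorem Mseq_decreasing (n : ℕ) (hn : 3 ≤ n) : Mseq (n + 1) ≤ Mseq n := by
  classical
  have hn0 : 0 < n := by omega
  have hnR : (0:ℝ) < n := Nat.cast_pos.2 hn0
  have hmRR : (0:ℝ) < ((n+1:ℕ):ℝ) := Nat.cast_pos.2 (by omega)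
  have hMeq : Mseq (n+1) = ⨆ (α : Fin (n+1) → ℂ) (β : Fin (n+1) → ℂ) (_ : discPair α β ≠ 0),
      ENNReal.ofReal (‖discPair α β‖
        ^ ((1 : ℝ) / (((n+1:ℕ) : ℝ) * (((n+1:ℕ) : ℝ) - 1)))) * areaPair α β := rfl
  rw [hMeq]
  refine iSup_le fun α => iSup_le fun β => iSup_le fun hD => ?_
  -- Area inequality via Hölder in polar coordinates
  have hA : areaPair α β
      ≤ ∏ k : Fin (n+1), areaPair (α ∘ k.succAbove) (β ∘ k.succAbove) ^ (1/((n+1:ℕ):ℝ)) := by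
    set G : Fin (n+1) → ℝ → ℝ≥0∞ := fun i θ =>
      ENNReal.ofReal (‖α i * (Real.cos θ:ℂ) - β i * (Real.sin θ:ℂ)‖) with hG
    set f : Fin (n+1) → ℝ → ℝ≥0∞ :=
      fun k θ => ∏ j : Fin n, G (k.succAbove j) θ ^ (-2/(n:ℝ)) with hf
    have hfmeas : ∀ k, Measurable (f k) := by
      intro k
      apply Finset.measurable_prod
      intro j _
      apply Measurable.pow_const
      apply Measurable.ennreal_ofReal
      exact (continuous_norm.comp (by fun_prop)).measurable
    have hAk : ∀ k : Fin (n+1), areaPair (α ∘ k.succAbove) (β ∘ k.succAbove)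
        = (∫⁻ θ in Set.Ioo (-π) π, f k θ) / 2 := by
      intro k
      rw [MseqAux.areaPair_eq hn0 (α ∘ k.succAbove) (β ∘ k.succAbove)]
      rfl
    have hpoint : ∀ θ : ℝ, ∏ i, G i θ ^ (-2/((n+1:ℕ):ℝ))
        = ∏ k : Fin (n+1), f k θ ^ (1/((n+1:ℕ):ℝ)) :=
      fun θ => MseqAux.pointwise_holder hn0 (fun i => G i θ)
    have hH : (∫⁻ θ in Set.Ioo (-π) π, ∏ i, G i θ ^ (-2/((n+1:ℕ):ℝ)))
        ≤ ∏ k : Fin (n+1), (∫⁻ θ in Set.Ioo (-π) π, f k θ) ^ (1/((n+1:ℕ):ℝ)) := by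
      simp_rw [hpoint]
      refine ENNReal.lintegral_prod_norm_pow_le _ (fun k _ => (hfmeas k).aemeasurable) ?_ ?_
      · rw [Finset.sum_const, Finset.card_univ, Fintype.card_fin, nsmul_eq_mul]
        field_simp
      · intro k _; positivity
    rw [MseqAux.areaPair_eq (by omega : 0 < n+1) α β]
    calc (∫⁻ θ in Set.Ioo (-π) π, ∏ i, G i θ ^ (-2/((n+1:ℕ):ℝ))) / 2
        ≤ (∏ k : Fin (n+1), (∫⁻ θ in Set.Ioo (-π) π, f k θ) ^ (1/((n+1:ℕ):ℝ))) / 2 :=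
          ENNReal.div_le_div_right hH 2
      _ = ∏ k : Fin (n+1), areaPair (α ∘ k.succAbove) (β ∘ k.succAbove) ^ (1/((n+1:ℕ):ℝ)) := by
          have h2 : ∀ k : Fin (n+1), (∫⁻ θ in Set.Ioo (-π) π, f k θ)
              = 2 * areaPair (α ∘ k.succAbove) (β ∘ k.succAbove) := by
            intro k
            rw [hAk k, mul_comm, ENNReal.div_mul_cancel (by norm_num) (by norm_num)]
          simp_rw [h2]
          rw [show (∏ k : Fin (n+1),
              (2 * areaPair (α ∘ k.succAbove) (β ∘ k.succAbove)) ^ (1/((n+1:ℕ):ℝ)))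
            = (∏ k : Fin (n+1), (2:ℝ≥0∞) ^ (1/((n+1:ℕ):ℝ)))
              * ∏ k : Fin (n+1), areaPair (α ∘ k.succAbove) (β ∘ k.succAbove) ^ (1/((n+1:ℕ):ℝ))
            from by
              rw [← Finset.prod_mul_distrib]
              exact Finset.prod_congr rfl fun k _ =>
                ENNReal.mul_rpow_of_nonneg _ _ (by positivity)]
          rw [Finset.prod_const, Finset.card_univ, Fintype.card_fin,
            ← ENNReal.rpow_natCast ((2:ℝ≥0∞) ^ (1/((n+1:ℕ):ℝ))) (n+1), ← ENNReal.rpow_mul,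
            one_div, inv_mul_cancel₀ (ne_of_gt hmRR), ENNReal.rpow_one, mul_comm,
            mul_div_assoc, ENNReal.div_self (by norm_num) (by norm_num), mul_one]
  -- Discriminant bookkeeping
  have hDk : ∀ k : Fin (n+1), discPair (α ∘ k.succAbove) (β ∘ k.succAbove) ≠ 0 :=
    fun k => MseqAux.discPair_comp_ne_zero hD k
  have ha : 0 < ‖discPair α β‖ := norm_pos_iff.2 hD
  have hak : ∀ k : Fin (n+1),
      0 < ‖discPair (α ∘ k.succAbove) (β ∘ k.succAbove)‖ :=
    fun k => norm_pos_iff.2 (hDk k)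
  set en : ℝ := (1 : ℝ) / ((n : ℝ) * ((n : ℝ) - 1)) with hen
  set em : ℝ := (1 : ℝ) / (((n+1:ℕ) : ℝ) * (((n+1:ℕ) : ℝ) - 1)) with hem
  have hreal : ∏ k : Fin (n+1),
      (‖discPair (α ∘ k.succAbove) (β ∘ k.succAbove)‖ ^ en) ^ (1/((n+1:ℕ):ℝ))
      = ‖discPair α β‖ ^ em := by
    have hprodk : ∏ k : Fin (n+1), ‖discPair (α ∘ k.succAbove) (β ∘ k.succAbove)‖
        = ‖discPair α β‖ ^ (n - 1) := by
      rw [← norm_prod, MseqAux.discPair_prod, norm_pow]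
    calc ∏ k : Fin (n+1),
        (‖discPair (α ∘ k.succAbove) (β ∘ k.succAbove)‖ ^ en) ^ (1/((n+1:ℕ):ℝ))
        = ∏ k : Fin (n+1),
          ‖discPair (α ∘ k.succAbove) (β ∘ k.succAbove)‖ ^ (en * (1/((n+1:ℕ):ℝ))) :=
          Finset.prod_congr rfl fun k _ => (Real.rpow_mul (hak k).le _ _).symm
      _ = (∏ k : Fin (n+1), ‖discPair (α ∘ k.succAbove) (β ∘ k.succAbove)‖)
            ^ (en * (1/((n+1:ℕ):ℝ))) :=
          (Real.finset_prod_rpow _ _ (fun k _ => (hak k).le) _)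
      _ = (‖discPair α β‖ ^ ((n:ℝ) - 1)) ^ (en * (1/((n+1:ℕ):ℝ))) := by
          rw [hprodk, ← Real.rpow_natCast (‖discPair α β‖) (n-1)]
          congr 1
          rw [Nat.cast_sub hn0]
          norm_num
      _ = ‖discPair α β‖ ^ em := by
          rw [← Real.rpow_mul ha.le]
          congr 1
          rw [hen, hem]
          push_cast
          have h1 : (n:ℝ) ≠ 0 := ne_of_gt hnR
          have h2 : (n:ℝ) - 1 ≠ 0 := by
            have : (1:ℝ) < (n:ℝ) := by exact_mod_cast (by omega : 1 < n)
            linarith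
          have h3 : (n:ℝ) + 1 ≠ 0 := by positivity
          field_simp
          ring_nf
          exact (mul_inv_cancel₀ h1).symm
  -- Each truncated form is dominated by `Mseq n`
  have hMk : ∀ k : Fin (n+1),
      ENNReal.ofReal (‖discPair (α ∘ k.succAbove) (β ∘ k.succAbove)‖ ^ en)
        * areaPair (α ∘ k.succAbove) (β ∘ k.succAbove) ≤ Mseq n := by
    intro k
    exact le_iSup_of_le (α ∘ k.succAbove) (le_iSup_of_le (β ∘ k.succAbove)
      (le_iSup_of_le (hDk k) le_rfl))
  -- Put everything together
  calc ENNReal.ofReal (‖discPair α β‖ ^ em) * areaPair α β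
      ≤ ENNReal.ofReal (‖discPair α β‖ ^ em)
          * ∏ k : Fin (n+1), areaPair (α ∘ k.succAbove) (β ∘ k.succAbove) ^ (1/((n+1:ℕ):ℝ)) :=
        mul_le_mul_right hA _
    _ = ∏ k : Fin (n+1),
          (ENNReal.ofReal (‖discPair (α ∘ k.succAbove) (β ∘ k.succAbove)‖ ^ en)
            * areaPair (α ∘ k.succAbove) (β ∘ k.succAbove)) ^ (1/((n+1:ℕ):ℝ)) := by
        rw [show (∏ k : Fin (n+1),
            (ENNReal.ofReal (‖discPair (α ∘ k.succAbove) (β ∘ k.succAbove)‖ ^ en)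
              * areaPair (α ∘ k.succAbove) (β ∘ k.succAbove)) ^ (1/((n+1:ℕ):ℝ)))
          = (∏ k : Fin (n+1),
              (ENNReal.ofReal (‖discPair (α ∘ k.succAbove) (β ∘ k.succAbove)‖ ^ en))
                ^ (1/((n+1:ℕ):ℝ)))
            * ∏ k : Fin (n+1),
                areaPair (α ∘ k.succAbove) (β ∘ k.succAbove) ^ (1/((n+1:ℕ):ℝ)) from by
            rw [← Finset.prod_mul_distrib]
            exact Finset.prod_congr rfl fun k _ =>
              ENNReal.mul_rpow_of_nonneg _ _ (by positivity)]
        congr 1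
        rw [show (∏ k : Fin (n+1),
            (ENNReal.ofReal (‖discPair (α ∘ k.succAbove) (β ∘ k.succAbove)‖ ^ en))
              ^ (1/((n+1:ℕ):ℝ)))
          = ∏ k : Fin (n+1), ENNReal.ofReal
              ((‖discPair (α ∘ k.succAbove) (β ∘ k.succAbove)‖ ^ en)
                ^ (1/((n+1:ℕ):ℝ))) from
          Finset.prod_congr rfl fun k _ =>
            ENNReal.ofReal_rpow_of_pos (Real.rpow_pos_of_pos (hak k) _)]
        rw [← ENNReal.ofReal_prod_of_nonneg
          (fun k _ => Real.rpow_nonneg (Real.rpow_nonneg (hak k).le _) _), hreal]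
    _ ≤ ∏ k : Fin (n+1), (Mseq n) ^ (1/((n+1:ℕ):ℝ)) :=
        Finset.prod_le_prod' fun k _ => ENNReal.rpow_le_rpow (hMk k) (by positivity)
    _ = Mseq n := by
        rw [Finset.prod_const, Finset.card_univ, Fintype.card_fin,
          ← ENNReal.rpow_natCast ((Mseq n) ^ (1/((n+1:ℕ):ℝ))) (n+1), ← ENNReal.rpow_mul,
          one_div, inv_mul_cancel₀ (ne_of_gt hmRR), ENNReal.rpow_one]
end

section
/- Let k ≥ 2 and let P_k(X,Y) = X^{2k} + (X−Y)²(2X−Y)²···(kX−Y)². Then the area of the region {(x,y) ∈ ℝ² : |P_k(x,y)| ≤ 1} is less than 16. -/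
open MeasureTheory Finset
open scoped ENNReal

/-- The binary form `P_k(X,Y) = X^(2k) + ∏_{j=1}^{k} (jX - Y)²`. -/
noncomputable def Pform (k : ℕ) (x y : ℝ) : ℝ :=
  x ^ (2 * k) + ∏ j ∈ Finset.Icc 1 k, ((j : ℝ) * x - y) ^ 2

namespace PformAux

/-- `Fk k = ⌊(k-1)/2⌋! * ⌈(k-1)/2⌉!`, minimal value of `(j₀-1)!(k-j₀)!`. -/
def Fk (k : ℕ) : ℕ := Nat.factorial ((k-1)/2) * Nat.factorial ((k-1) - (k-1)/2)

lemma Fk_pos (k : ℕ) : 0 < Fk k := Nat.mul_pos (Nat.factorial_pos _) (Nat.factorial_pos _)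

lemma fact_min (n i : ℕ) (h : i ≤ n) :
    Nat.factorial (n/2) * Nat.factorial (n - n/2) ≤ Nat.factorial i * Nat.factorial (n - i) := by
  have h1 := Nat.choose_mul_factorial_mul_factorial h
  have h2 := Nat.choose_mul_factorial_mul_factorial (Nat.div_le_self n 2)
  have h3 := Nat.choose_le_middle i n
  have hpos : 0 < n.choose (n/2) := Nat.choose_pos (Nat.div_le_self n 2)
  have key : n.choose (n/2) * (Nat.factorial (n/2) * Nat.factorial (n - n/2))
      ≤ n.choose (n/2) * (Nat.factorial i * Nat.factorial (n - i)) := by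
    calc n.choose (n/2) * (Nat.factorial (n/2) * Nat.factorial (n - n/2))
        = n.choose (n/2) * Nat.factorial (n/2) * Nat.factorial (n - n/2) := by ring
      _ = Nat.factorial n := h2
      _ = n.choose i * Nat.factorial i * Nat.factorial (n - i) := h1.symm
      _ = n.choose i * (Nat.factorial i * Nat.factorial (n - i)) := by ring
      _ ≤ n.choose (n/2) * (Nat.factorial i * Nat.factorial (n - i)) :=
          Nat.mul_le_mul_right _ h3
  exact Nat.le_of_mul_le_mul_left key hpos

lemma prod_shift_factorial (a m : ℕ) :
    (∏ j ∈ Icc (a+1) (a+m), (j - a)) = Nat.factorial m := by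
  rw [← Finset.Ico_add_one_right_eq_Icc, Finset.prod_Ico_eq_prod_range]
  have : a + m + 1 - (a + 1) = m := by omega
  rw [this]
  rw [← Finset.prod_range_add_one_eq_factorial]
  apply Finset.prod_congr rfl
  intro i _
  omega

lemma prod_reflect_factorial (m : ℕ) :
    (∏ j ∈ Icc 1 m, (m + 1 - j)) = Nat.factorial m := by
  rw [← Finset.Ico_add_one_right_eq_Icc, Finset.prod_Ico_eq_prod_range]
  have : m + 1 - 1 = m := by omega
  rw [this]
  rw [← Finset.prod_range_add_one_eq_factorial]
  rw [← Finset.prod_range_reflect (fun i => i + 1) m]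
  apply Finset.prod_congr rfl
  intro i hi
  simp only [Finset.mem_range] at hi
  omega

lemma prod_dist_eq (k j₀ : ℕ) (h1 : 1 ≤ j₀) (h2 : j₀ ≤ k) :
    ∏ j ∈ Icc 1 k \ {j₀}, |(j:ℝ) - (j₀:ℝ)|
      = ((Nat.factorial (j₀-1) * Nat.factorial (k-j₀) : ℕ) : ℝ) := by
  have hsplit : Icc 1 k \ {j₀} = Icc 1 (j₀-1) ∪ Icc (j₀+1) k := by
    ext j
    simp only [Finset.mem_sdiff, Finset.mem_Icc, Finset.mem_union, Finset.mem_singleton]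
    omega
  have hdisj : Disjoint (Icc 1 (j₀-1)) (Icc (j₀+1) k) := by
    rw [Finset.disjoint_left]
    intro j hj hj'
    simp only [Finset.mem_Icc] at hj hj'
    omega
  rw [hsplit, Finset.prod_union hdisj]
  have hA : ∏ j ∈ Icc 1 (j₀-1), |(j:ℝ) - (j₀:ℝ)| = ((Nat.factorial (j₀-1) : ℕ) : ℝ) := by
    rw [← prod_reflect_factorial (j₀ - 1), Nat.cast_prod]
    apply Finset.prod_congr rfl
    intro j hj
    simp only [Finset.mem_Icc] at hj
    rw [abs_sub_comm, abs_of_nonneg (by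
      rw [sub_nonneg]; exact_mod_cast Nat.le_of_lt_succ (by omega))]
    have : (j₀ - 1) + 1 - j = j₀ - j := by omega
    rw [this, Nat.cast_sub (by omega)]
  have hB : ∏ j ∈ Icc (j₀+1) k, |(j:ℝ) - (j₀:ℝ)| = ((Nat.factorial (k-j₀) : ℕ) : ℝ) := by
    have hk' : k = j₀ + (k - j₀) := by omega
    rw [← prod_shift_factorial j₀ (k - j₀), ← hk', Nat.cast_prod]
    apply Finset.prod_congr rfl
    intro j hj
    simp only [Finset.mem_Icc] at hj
    rw [abs_of_nonneg (by rw [sub_nonneg]; exact_mod_cast by omega)]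
    rw [Nat.cast_sub (by omega)]
  rw [hA, hB, ← Nat.cast_mul]

lemma prod_dist_ge (k j₀ : ℕ) (h1 : 1 ≤ j₀) (h2 : j₀ ≤ k) :
    ((Fk k : ℕ) : ℝ) ≤ ∏ j ∈ Icc 1 k \ {j₀}, |(j:ℝ) - (j₀:ℝ)| := by
  rw [prod_dist_eq k j₀ h1 h2]
  have : Fk k ≤ Nat.factorial (j₀-1) * Nat.factorial (k-j₀) := by
    have h := fact_min (k-1) (j₀-1) (by omega)
    have e1 : (k-1) - (j₀-1) = k - j₀ := by omega
    rw [e1] at h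
    exact h
  exact_mod_cast this

lemma cover (k : ℕ) (hk : 1 ≤ k) (t₀ R : ℝ) (ht₀ : 0 < t₀)
    (hR : (2/t₀)^(k-1) ≤ R * Fk k) (x y : ℝ) (hx : t₀ < |x|)
    (hy : ∏ j ∈ Icc 1 k, ((j:ℝ)*x - y)^2 ≤ 1) :
    ∃ j ∈ Icc 1 k, |(j:ℝ)*x - y| ≤ R := by
  obtain ⟨j₀, hj₀mem, hmin⟩ := Finset.exists_min_image (Icc 1 k)
    (fun j => |(j:ℝ)*x - y|) ⟨1, by simp [Finset.mem_Icc]; omega⟩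
  simp only [Finset.mem_Icc] at hj₀mem
  refine ⟨j₀, by simp [Finset.mem_Icc]; omega, ?_⟩
  set d := |(j₀:ℝ)*x - y| with hd
  -- product of absolute values is ≤ 1
  have hQ : ∏ j ∈ Icc 1 k, |(j:ℝ)*x - y| ≤ 1 := by
    have h1 : (∏ j ∈ Icc 1 k, |(j:ℝ)*x - y|)^2 ≤ 1 := by
      rw [← Finset.prod_pow]
      calc ∏ j ∈ Icc 1 k, |(j:ℝ)*x - y|^2 = ∏ j ∈ Icc 1 k, ((j:ℝ)*x - y)^2 := by
            apply Finset.prod_congr rfl; intro j _; rw [sq_abs]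
        _ ≤ 1 := hy
    nlinarith [Finset.prod_nonneg (fun j (_ : j ∈ Icc 1 k) => abs_nonneg ((j:ℝ)*x - y))]
  -- each other factor is at least |j - j₀| * t₀ / 2
  have hfac : ∀ j ∈ Icc 1 k \ {j₀}, |(j:ℝ) - (j₀:ℝ)| * (t₀/2) ≤ |(j:ℝ)*x - y| := by
    intro j hj
    rw [Finset.mem_sdiff, Finset.mem_Icc, Finset.mem_singleton] at hj
    have h1 : d ≤ |(j:ℝ)*x - y| := hmin j (by simp [Finset.mem_Icc]; omega)
    have htri : |(j:ℝ) - (j₀:ℝ)| * |x| ≤ |(j:ℝ)*x - y| + d := by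
      have : |(j:ℝ)*x - (j₀:ℝ)*x| ≤ |(j:ℝ)*x - y| + |y - (j₀:ℝ)*x| := abs_sub_le _ _ _
      rw [abs_sub_comm y ((j₀:ℝ)*x)] at this
      calc |(j:ℝ) - (j₀:ℝ)| * |x| = |(j:ℝ)*x - (j₀:ℝ)*x| := by
            rw [← abs_mul]; ring_nf
        _ ≤ |(j:ℝ)*x - y| + d := this
    have habs : 0 ≤ |(j:ℝ) - (j₀:ℝ)| := abs_nonneg _
    nlinarith [mul_le_mul_of_nonneg_left hx.le habs]
  -- putting it together
  have hprodsplit : d * ∏ j ∈ Icc 1 k \ {j₀}, (|(j:ℝ) - (j₀:ℝ)| * (t₀/2))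
      ≤ ∏ j ∈ Icc 1 k, |(j:ℝ)*x - y| := by
    rw [Finset.prod_eq_mul_prod_sdiff_singleton_of_mem
      (by simp [Finset.mem_Icc]; omega : j₀ ∈ Icc 1 k) (fun j => |(j:ℝ)*x - y|)]
    exact mul_le_mul_of_nonneg_left
      (Finset.prod_le_prod (fun j _ => by positivity) hfac) (abs_nonneg _)
  have hcard : (Icc 1 k \ {j₀}).card = k - 1 := by
    rw [Finset.card_sdiff_of_subset (by simp [Finset.mem_Icc]; omega)]
    simp [Nat.card_Icc]
  have hsplit2 : ∏ j ∈ Icc 1 k \ {j₀}, (|(j:ℝ) - (j₀:ℝ)| * (t₀/2))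
      = (∏ j ∈ Icc 1 k \ {j₀}, |(j:ℝ) - (j₀:ℝ)|) * (t₀/2)^(k-1) := by
    rw [Finset.prod_mul_distrib, Finset.prod_const, hcard]
  have hpw : 0 < (t₀/2)^(k-1) := by positivity
  have hF : (0:ℝ) < Fk k := by exact_mod_cast Fk_pos k
  have hchain : d * ((Fk k : ℝ) * (t₀/2)^(k-1)) ≤ 1 := by
    calc d * ((Fk k : ℝ) * (t₀/2)^(k-1))
        ≤ d * ((∏ j ∈ Icc 1 k \ {j₀}, |(j:ℝ) - (j₀:ℝ)|) * (t₀/2)^(k-1)) := by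
          apply mul_le_mul_of_nonneg_left _ (abs_nonneg _)
          exact mul_le_mul_of_nonneg_right (prod_dist_ge k j₀ (by omega) (by omega)) hpw.le
      _ = d * ∏ j ∈ Icc 1 k \ {j₀}, (|(j:ℝ) - (j₀:ℝ)| * (t₀/2)) := by rw [hsplit2]
      _ ≤ ∏ j ∈ Icc 1 k, |(j:ℝ)*x - y| := hprodsplit
      _ ≤ 1 := hQ
  -- conclude d ≤ R
  have hinv : (2/t₀)^(k-1) = ((t₀/2)^(k-1))⁻¹ := by
    rw [← inv_pow]
    congr 1
    field_simp
  have hRF : 1 ≤ R * (Fk k : ℝ) * (t₀/2)^(k-1) := by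
    have := mul_le_mul_of_nonneg_right hR hpw.le
    rw [hinv] at this
    rw [inv_mul_cancel₀ (ne_of_gt hpw)] at this
    linarith
  have := hchain.trans hRF
  rw [mul_assoc] at this
  exact le_of_mul_le_mul_right this (by positivity)

lemma integral_abs_symm (a : ℝ) (ha : 0 ≤ a) : ∫ x in (-a)..a, |x| = a^2 := by
  have hint : IntervalIntegrable (fun x : ℝ => |x|) volume (-a) 0 :=
    continuous_abs.intervalIntegrable _ _
  have hint2 : IntervalIntegrable (fun x : ℝ => |x|) volume 0 a :=
    continuous_abs.intervalIntegrable _ _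
  have h1 : ∫ x in (0:ℝ)..a, |x| = a^2/2 := by
    rw [intervalIntegral.integral_congr (g := fun x : ℝ => x) ?_]
    · rw [integral_id]; ring
    · intro z hz
      rw [Set.uIcc_of_le ha] at hz
      exact abs_of_nonneg hz.1
  have h2 : ∫ x in (-a)..(0:ℝ), |x| = a^2/2 := by
    have := intervalIntegral.integral_comp_neg (a := 0) (b := a) (fun x : ℝ => |x|)
    simp only [abs_neg, neg_zero] at this
    rw [← this, h1]
  rw [← intervalIntegral.integral_add_adjacent_intervals hint hint2, h1, h2]
  ring

lemma master (k : ℕ) (hk : 2 ≤ k) (t₀ R : ℝ) (ht₀ : 0 < t₀) (ht₁ : t₀ ≤ 1) (hR : 0 ≤ R)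
    (H : ∀ x y : ℝ, t₀ < |x| → |x| ≤ 1 → (∏ j ∈ Icc 1 k, ((j:ℝ)*x - y)^2) ≤ 1 →
      ∃ j ∈ Icc 1 k, |(j:ℝ)*x - y| ≤ R) :
    volume {p : ℝ × ℝ | |Pform k p.1 p.2| ≤ 1}
      ≤ ENNReal.ofReal (((k:ℝ)-1)*t₀^2 + 4*t₀ + 4*k*R) := by
  set S : Set (ℝ × ℝ) := {p : ℝ × ℝ | |Pform k p.1 p.2| ≤ 1} with hS
  have hcont : Continuous fun p : ℝ × ℝ => Pform k p.1 p.2 := by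
    unfold Pform
    apply Continuous.add
    · fun_prop
    · exact continuous_finset_prod _ (fun j _ => by fun_prop)
  have hSm : MeasurableSet S := (isClosed_le hcont.abs continuous_const).measurableSet
  have hk1 : (0:ℝ) ≤ (k:ℝ)-1 := by
    have : (2:ℝ) ≤ (k:ℝ) := by exact_mod_cast hk
    linarith
  have hmem : ∀ x y : ℝ, (x, y) ∈ S →
      |x| ≤ 1 ∧ (∏ j ∈ Icc 1 k, ((j:ℝ)*x - y)^2) ≤ 1 := by
    intro x y h
    simp only [hS, Set.mem_setOf_eq] at h
    have hP : Pform k x y ≤ 1 := le_trans (le_abs_self _) h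
    have hprod0 : (0:ℝ) ≤ ∏ j ∈ Icc 1 k, ((j:ℝ)*x - y)^2 :=
      Finset.prod_nonneg (fun j _ => sq_nonneg _)
    have hxpow0 : (0:ℝ) ≤ x^(2*k) := by rw [pow_mul]; positivity
    have hxpow : x^(2*k) ≤ 1 := by unfold Pform at hP; linarith
    have hprod1 : (∏ j ∈ Icc 1 k, ((j:ℝ)*x - y)^2) ≤ 1 := by
      unfold Pform at hP; linarith
    refine ⟨?_, hprod1⟩
    by_contra hcon
    push_neg at hcon
    have h2 : (1:ℝ) < |x|^(2*k) := one_lt_pow₀ hcon (by omega)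
    rw [pow_abs, abs_of_nonneg hxpow0] at h2
    linarith
  rw [Measure.volume_eq_prod, Measure.prod_apply hSm]
  set g : ℝ → ℝ≥0∞ := fun x =>
    (Set.Icc (-t₀) t₀).indicator (fun x => ENNReal.ofReal (((k:ℝ)-1)*|x| + 2)) x
      + (Set.Icc (-1:ℝ) 1).indicator (fun _ => ENNReal.ofReal (2*k*R)) x with hg
  have hslice : ∀ x : ℝ, volume (Prod.mk x ⁻¹' S) ≤ g x := by
    intro x
    rcases Set.eq_empty_or_nonempty (Prod.mk x ⁻¹' S) with he | ⟨y₀, hy₀⟩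
    · simp [he]
    · have hx1 : |x| ≤ 1 := (hmem x y₀ hy₀).1
      have hxIcc1 : x ∈ Set.Icc (-1:ℝ) 1 := by
        rw [Set.mem_Icc]; exact abs_le.mp hx1
      rcases le_or_gt |x| t₀ with hcase | hcase
      · -- small x : slice inside an interval of length (k-1)|x| + 2
        have hsub : Prod.mk x ⁻¹' S ⊆
            Set.Icc (min x ((k:ℝ)*x) - 1) (max x ((k:ℝ)*x) + 1) := by
          intro y hy
          have hprod := (hmem x y hy).2
          have hex : ∃ j ∈ Icc 1 k, ((j:ℝ)*x - y)^2 ≤ 1 := by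
            by_contra hcon
            push_neg at hcon
            have h1 : (1:ℝ) < ∏ j ∈ Icc 1 k, ((j:ℝ)*x - y)^2 := by
              have := Finset.prod_lt_prod_of_nonempty (s := Icc 1 k)
                (f := fun _ : ℕ => (1:ℝ)) (g := fun j : ℕ => ((j:ℝ)*x - y)^2)
                (fun j _ => one_pos)
                (fun j hj => hcon j hj) ⟨1, by simp [Finset.mem_Icc]; omega⟩
              simpa using this
            linarith
          obtain ⟨j, hjmem, hj⟩ := hex
          have habs : |(j:ℝ)*x - y| ≤ 1 := by
            nlinarith [abs_nonneg ((j:ℝ)*x - y), sq_abs ((j:ℝ)*x - y),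
              sq_nonneg (|(j:ℝ)*x - y| - 1)]
          rw [Finset.mem_Icc] at hjmem
          have hj1 : (1:ℝ) ≤ (j:ℝ) := by exact_mod_cast hjmem.1
          have hjk : (j:ℝ) ≤ (k:ℝ) := by exact_mod_cast hjmem.2
          have hbetween : min x ((k:ℝ)*x) ≤ (j:ℝ)*x ∧ (j:ℝ)*x ≤ max x ((k:ℝ)*x) := by
            rcases le_or_gt 0 x with hx0 | hx0
            · constructor
              · exact le_trans (min_le_left _ _) (by nlinarith)
              · exact le_trans (by nlinarith) (le_max_right _ _)
            · constructor
              · exact le_trans (min_le_right _ _) (by nlinarith)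
              · exact le_trans (by nlinarith) (le_max_left _ _)
          rw [abs_le] at habs
          rw [Set.mem_Icc]
          exact ⟨by linarith [hbetween.1], by linarith [hbetween.2]⟩
        have hlen : max x ((k:ℝ)*x) + 1 - (min x ((k:ℝ)*x) - 1) = ((k:ℝ)-1)*|x| + 2 := by
          have h1 : max x ((k:ℝ)*x) - min x ((k:ℝ)*x) = |(k:ℝ)*x - x| := by
            exact max_sub_min_eq_abs _ _
          have h2 : |(k:ℝ)*x - x| = ((k:ℝ)-1)*|x| := by
            rw [show (k:ℝ)*x - x = ((k:ℝ)-1)*x by ring, abs_mul,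
              abs_of_nonneg (by
                have : (2:ℝ) ≤ (k:ℝ) := by exact_mod_cast hk
                linarith)]
          linarith
        calc volume (Prod.mk x ⁻¹' S)
            ≤ volume (Set.Icc (min x ((k:ℝ)*x) - 1) (max x ((k:ℝ)*x) + 1)) :=
              measure_mono hsub
          _ = ENNReal.ofReal (((k:ℝ)-1)*|x| + 2) := by rw [Real.volume_Icc, hlen]
          _ ≤ g x := by
              rw [hg]
              have hxIcc : x ∈ Set.Icc (-t₀) t₀ := by rw [Set.mem_Icc]; exact abs_le.mp hcase
              simp only [Set.indicator_of_mem hxIcc]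
              exact le_add_of_nonneg_right zero_le
      · -- medium x : slice inside a union of k intervals of radius R
        have hsub : Prod.mk x ⁻¹' S ⊆
            ⋃ j ∈ Icc 1 k, Set.Icc ((j:ℝ)*x - R) ((j:ℝ)*x + R) := by
          intro y hy
          obtain ⟨j, hjm, hjR⟩ := H x y hcase hx1 (hmem x y hy).2
          rw [abs_le] at hjR
          exact Set.mem_biUnion hjm (by rw [Set.mem_Icc]; constructor <;> linarith [hjR.1, hjR.2])
        calc volume (Prod.mk x ⁻¹' S)
            ≤ ∑ j ∈ Icc 1 k, volume (Set.Icc ((j:ℝ)*x - R) ((j:ℝ)*x + R)) :=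
              le_trans (measure_mono hsub) (measure_biUnion_finset_le _ _)
          _ = ∑ j ∈ Icc 1 k, ENNReal.ofReal (2*R) := by
              apply Finset.sum_congr rfl
              intro j _
              rw [Real.volume_Icc]
              congr 1
              ring
          _ = (k : ℝ≥0∞) * ENNReal.ofReal (2*R) := by
              rw [Finset.sum_const, Nat.card_Icc]
              simp [nsmul_eq_mul]
          _ = ENNReal.ofReal (2*k*R) := by
              rw [← ENNReal.ofReal_natCast k, ← ENNReal.ofReal_mul (by positivity)]
              congr 1
              ring
          _ ≤ g x := by
              rw [hg]
              simp only [Set.indicator_of_mem hxIcc1]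
              exact le_add_of_nonneg_left zero_le
  calc ∫⁻ x, volume (Prod.mk x ⁻¹' S) ≤ ∫⁻ x, g x := lintegral_mono hslice
    _ ≤ ENNReal.ofReal (((k:ℝ)-1)*t₀^2 + 4*t₀ + 4*k*R) := by
        rw [hg]
        rw [lintegral_add_left (by
          apply Measurable.indicator _ measurableSet_Icc
          exact (Measurable.ennreal_ofReal (by fun_prop)))]
        rw [lintegral_indicator measurableSet_Icc, lintegral_indicator measurableSet_Icc]
        have hI2 : (∫⁻ _ in Set.Icc (-1:ℝ) 1, ENNReal.ofReal (2*k*R)) = ENNReal.ofReal (4*k*R) := by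
          rw [MeasureTheory.setLIntegral_const, Real.volume_Icc]
          rw [← ENNReal.ofReal_mul (mul_nonneg (by positivity) hR)]
          congr 1
          ring
        have hI1 : (∫⁻ x in Set.Icc (-t₀) t₀, ENNReal.ofReal (((k:ℝ)-1)*|x| + 2))
            = ENNReal.ofReal (((k:ℝ)-1)*t₀^2 + 4*t₀) := by
          have hfc : Continuous fun x : ℝ => ((k:ℝ)-1)*|x| + 2 := by fun_prop
          have hfi : IntegrableOn (fun x : ℝ => ((k:ℝ)-1)*|x| + 2) (Set.Icc (-t₀) t₀) volume :=
            hfc.integrableOn_Icc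
          rw [← MeasureTheory.ofReal_integral_eq_lintegral_ofReal hfi
            (Filter.Eventually.of_forall (fun x => by
              simpa using (by nlinarith [abs_nonneg x] : (0:ℝ) ≤ ((k:ℝ)-1)*|x|+2)))]
          congr 1
          rw [MeasureTheory.integral_Icc_eq_integral_Ioc,
            ← intervalIntegral.integral_of_le (by linarith : -t₀ ≤ t₀)]
          rw [intervalIntegral.integral_add (by
              exact ((continuous_const.mul continuous_abs).intervalIntegrable _ _))
            (intervalIntegrable_const)]
          rw [intervalIntegral.integral_const_mul, integral_abs_symm t₀ ht₀.le,
            intervalIntegral.integral_const]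
          simp only [smul_eq_mul]
          ring
        rw [hI1, hI2]
        rw [← ENNReal.ofReal_add (by nlinarith [sq_nonneg t₀])
          (mul_nonneg (mul_nonneg (by norm_num) (by positivity)) hR)]

lemma Fk_succ (k : ℕ) (hk : 1 ≤ k) : Fk (k+1) = ((k+1)/2) * Fk k := by
  unfold Fk
  obtain ⟨m, rfl | rfl⟩ := Nat.even_or_odd' k
  · have hm : 1 ≤ m := by omega
    have e1 : (2*m+1-1)/2 = m := by omega
    have e2 : 2*m+1-1 - (2*m+1-1)/2 = m := by omega
    have e3 : (2*m-1)/2 = m-1 := by omega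
    have e4 : 2*m-1 - (2*m-1)/2 = m := by omega
    have e5 : (2*m+1)/2 = m := by omega
    rw [e2, e1, e4, e3, e5]
    have hfact : m.factorial = m * (m-1).factorial := by
      conv_lhs => rw [show m = (m-1)+1 by omega]
      rw [Nat.factorial_succ]
      congr 2
      omega
    rw [hfact]
    ring
  · have e1 : (2*m+2-1)/2 = m := by omega
    have e2 : 2*m+2-1 - (2*m+2-1)/2 = m+1 := by omega
    have e3 : (2*m+1-1)/2 = m := by omega
    have e4 : 2*m+1-1 - (2*m+1-1)/2 = m := by omega
    have e5 : (2*m+2)/2 = m+1 := by omega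
    rw [e2, e1, e4, e3, e5, Nat.factorial_succ]
    ring

lemma J (n : ℕ) (hn : 13 ≤ n) : 8*((n:ℝ)+1)*((n:ℝ)/6)^n ≤ (Fk (n+1) : ℕ) := by
  induction n, hn using Nat.le_induction with
  | base =>
      have hFk : Fk 14 = 3628800 := by norm_num [Fk, Nat.factorial]
      rw [hFk]
      norm_num
  | succ n hn ih =>
      have hn1 : (13:ℝ) ≤ (n:ℝ) := by exact_mod_cast hn
      have hnpos : (0:ℝ) < (n:ℝ) := by linarith
      have hexp : (((n:ℝ)+1)/(n:ℝ))^n ≤ Real.exp 1 := by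
        have h1 : ((n:ℝ)+1)/(n:ℝ) = 1 + 1/(n:ℝ) := by field_simp
        have h2 : 1 + 1/(n:ℝ) ≤ Real.exp (1/(n:ℝ)) := by
          have := Real.add_one_le_exp (1/(n:ℝ))
          linarith
        calc (((n:ℝ)+1)/(n:ℝ))^n ≤ (Real.exp (1/(n:ℝ)))^n := by
              rw [h1]
              exact pow_le_pow_left₀ (by positivity) h2 n
          _ = Real.exp ((n:ℕ) * (1/(n:ℝ))) := by rw [Real.exp_nat_mul]
          _ = Real.exp 1 := by rw [mul_one_div, div_self (ne_of_gt hnpos)]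
      have he1 : Real.exp 1 ≤ 2.7182818286 := Real.exp_one_lt_d9.le
      have hFk : (Fk (n+2) : ℝ) = (((n+2)/2 : ℕ) : ℝ) * (Fk (n+1) : ℕ) := by
        have := Fk_succ (n+1) (by omega)
        exact_mod_cast congrArg (fun z : ℕ => (z:ℝ)) this
      have hhalf : ((n:ℝ)+1)/2 ≤ (((n+2)/2 : ℕ) : ℝ) := by
        have h : n + 1 ≤ 2*((n+2)/2) := by omega
        have h' : ((n:ℝ)+1) ≤ 2*(((n+2)/2 : ℕ) : ℝ) := by exact_mod_cast h
        linarith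
      have hB : (((n:ℝ)+1)/6)^n = ((n:ℝ)/6)^n * (((n:ℝ)+1)/(n:ℝ))^n := by
        rw [← mul_pow]
        congr 1
        field_simp
      have hP1 : (0:ℝ) ≤ ((n:ℝ)/6)^n := by positivity
      push_cast
      calc 8*((n:ℝ)+1+1)*(((n:ℝ)+1)/6)^(n+1)
          = (8*((n:ℝ)+2)*(((n:ℝ)+1)/6)) * ((((n:ℝ)+1)/6)^n) := by rw [pow_succ]; ring
        _ = (8*((n:ℝ)+2)*(((n:ℝ)+1)/6)) * (((n:ℝ)/6)^n * (((n:ℝ)+1)/(n:ℝ))^n) := by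
            rw [hB]
        _ ≤ (8*((n:ℝ)+2)*(((n:ℝ)+1)/6)) * (((n:ℝ)/6)^n * 2.7182818286) := by
            apply mul_le_mul_of_nonneg_left _ (by positivity)
            exact mul_le_mul_of_nonneg_left (hexp.trans he1) hP1
        _ = (2.7182818286*((n:ℝ)+2)/6) * (8*((n:ℝ)+1)*((n:ℝ)/6)^n) := by ring
        _ ≤ (2.7182818286*((n:ℝ)+2)/6) * (Fk (n+1) : ℕ) := by
            apply mul_le_mul_of_nonneg_left ih (by positivity)
        _ ≤ (((n+2)/2 : ℕ) : ℝ) * (Fk (n+1) : ℕ) := by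
            apply mul_le_mul_of_nonneg_right _ (Nat.cast_nonneg _)
            linarith [hhalf]
        _ = (Fk (n+2) : ℝ) := hFk.symm
        _ = _ := by push_cast; ring


lemma lt16 {c : ℝ} (h : c < 16) : ENNReal.ofReal c < 16 := by
  rw [show (16:ℝ≥0∞) = ENNReal.ofReal 16 by norm_num]
  exact (ENNReal.ofReal_lt_ofReal_iff (by norm_num)).mpr h

end PformAux

open PformAux in
/-- For `k ≥ 2`, the area of the region `{(x,y) : |P_k(x,y)| ≤ 1}` is less than `16`. -/
theorem Pform_area_lt_sixteen (k : ℕ) (hk : 2 ≤ k) :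
    volume {p : ℝ × ℝ | |Pform k p.1 p.2| ≤ 1} < 16 := by
  rcases lt_or_ge k 13 with hk13 | hk13
  · -- 2 ≤ k ≤ 12 : take t₀ = 1, R = 0; area ≤ k + 3 ≤ 15
    have hH : ∀ x y : ℝ, (1:ℝ) < |x| → |x| ≤ 1 →
        (∏ j ∈ Icc 1 k, ((j:ℝ)*x - y)^2) ≤ 1 → ∃ j ∈ Icc 1 k, |(j:ℝ)*x - y| ≤ (0:ℝ) := by
      intro x y h1 h2 _
      exact absurd (h1.trans_le h2) (lt_irrefl _)
    have hm := master k hk 1 0 one_pos le_rfl le_rfl hH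
    refine lt_of_le_of_lt hm (lt16 ?_)
    have hkr : (k:ℝ) ≤ 12 := by exact_mod_cast Nat.lt_succ_iff.mp hk13
    nlinarith
  · rcases lt_or_ge k 14 with hk14 | hk14
    · -- k = 13 : take t₀ = 9/10, R = 1/30
      have hkeq : k = 13 := by omega
      subst hkeq
      have hFk : Fk 13 = 518400 := by norm_num [Fk, Nat.factorial]
      have hcov : ∀ x y : ℝ, (9/10:ℝ) < |x| → |x| ≤ 1 →
          (∏ j ∈ Icc (1:ℕ) 13, ((j:ℝ)*x - y)^2) ≤ 1 →
          ∃ j ∈ Icc (1:ℕ) 13, |(j:ℝ)*x - y| ≤ (1/30:ℝ) := by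
        intro x y h1 _ h3
        refine cover 13 (by norm_num) (9/10) (1/30) (by norm_num) ?_ x y h1 h3
        rw [hFk]
        norm_num
      have hm := master 13 (by norm_num) (9/10) (1/30) (by norm_num) (by norm_num)
        (by norm_num) hcov
      refine lt_of_le_of_lt hm (lt16 ?_)
      norm_num
    · -- k ≥ 14 : take t₀ = 12/(k-1), R = 1/(8k)
      have hkr : (14:ℝ) ≤ (k:ℝ) := by exact_mod_cast hk14
      have hk1 : (13:ℝ) ≤ (k:ℝ) - 1 := by linarith
      have hk1pos : (0:ℝ) < (k:ℝ) - 1 := by linarith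
      have hkpos : (0:ℝ) < (k:ℝ) := by linarith
      have hJ : 8*(k:ℝ)*(((k:ℝ)-1)/6)^(k-1) ≤ (Fk k : ℕ) := by
        have := J (k-1) (by omega)
        have e1 : k - 1 + 1 = k := by omega
        rw [e1] at this
        have e2 : ((k-1 : ℕ) : ℝ) = (k:ℝ) - 1 := by
          push_cast [Nat.cast_sub (by omega : 1 ≤ k)]
          ring
        rw [e2] at this
        linarith
      have hcov : ∀ x y : ℝ, (12/((k:ℝ)-1)) < |x| → |x| ≤ 1 →
          (∏ j ∈ Icc 1 k, ((j:ℝ)*x - y)^2) ≤ 1 →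
          ∃ j ∈ Icc 1 k, |(j:ℝ)*x - y| ≤ (1/(8*(k:ℝ))) := by
        intro x y h1 _ h3
        refine cover k (by omega) (12/((k:ℝ)-1)) (1/(8*(k:ℝ))) (by positivity) ?_ x y h1 h3
        have e3 : (2:ℝ)/(12/((k:ℝ)-1)) = ((k:ℝ)-1)/6 := by
          field_simp
          ring
        rw [e3]
        rw [div_mul_eq_mul_div, le_div_iff₀ (by positivity)]
        calc (((k:ℝ)-1)/6)^(k-1) * (8*(k:ℝ))
            = 8*(k:ℝ)*(((k:ℝ)-1)/6)^(k-1) := by ring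
          _ ≤ (Fk k : ℕ) := hJ
          _ = 1 * (Fk k : ℕ) := by ring
      have hm := master k hk (12/((k:ℝ)-1)) (1/(8*(k:ℝ)))
        (by positivity) (by rw [div_le_one hk1pos]; linarith) (by positivity) hcov
      refine lt_of_le_of_lt hm (lt16 ?_)
      have hexp : ((k:ℝ)-1)*(12/((k:ℝ)-1))^2 + 4*(12/((k:ℝ)-1)) + 4*(k:ℝ)*(1/(8*(k:ℝ)))
          = 192/((k:ℝ)-1) + 1/2 := by
        field_simp
        ring
      rw [hexp]
      rw [div_add' _ _ _ (ne_of_gt hk1pos), div_lt_iff₀ hk1pos]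
      nlinarith
end

section
/- Let F(X,Y) be a binary form with complex coefficients, of degree n ≥ 3, whose discriminant D_F is non-zero. Then the area A_F of the region {(x,y) ∈ ℝ² : |F(x,y)| ≤ 1} is finite. -/
open MeasureTheory Finset
open scoped ENNReal

lemma aux_vol (t K : ℝ) (hK : 0 ≤ K) :
    volume {p : ℝ × ℝ | |p.2 - t * p.1| ≤ K / (1 + |p.1|) ^ 2} < ⊤ := by
  have hmeas : MeasurableSet {p : ℝ × ℝ | |p.2 - t * p.1| ≤ K / (1 + |p.1|) ^ 2} := by
    apply measurableSet_le <;> fun_prop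
  have hvol : (volume : Measure (ℝ × ℝ)) = (volume : Measure ℝ).prod volume := rfl
  rw [hvol, Measure.prod_apply hmeas]
  have hle : ∫⁻ x : ℝ, volume (Prod.mk x ⁻¹' {p : ℝ × ℝ | |p.2 - t * p.1| ≤ K / (1 + |p.1|) ^ 2})
      ≤ ∫⁻ x : ℝ, ENNReal.ofReal (2 * K * (1 + x ^ 2)⁻¹) := by
    apply MeasureTheory.lintegral_mono
    intro x
    show volume (Prod.mk x ⁻¹' {p : ℝ × ℝ | |p.2 - t * p.1| ≤ K / (1 + |p.1|) ^ 2}) ≤ _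
    have hslice : (Prod.mk x ⁻¹' {p : ℝ × ℝ | |p.2 - t * p.1| ≤ K / (1 + |p.1|) ^ 2})
        = Set.Icc (t * x - K / (1 + |x|) ^ 2) (t * x + K / (1 + |x|) ^ 2) := by
      ext y
      simp only [Set.mem_preimage, Set.mem_setOf_eq, Set.mem_Icc, abs_le]
      constructor <;> intro h <;> constructor <;> linarith [h.1, h.2]
    rw [hslice, Real.volume_Icc]
    apply ENNReal.ofReal_le_ofReal
    have h2 : (0:ℝ) < 1 + x ^ 2 := by positivity
    have h3 : 1 + x ^ 2 ≤ (1 + |x|) ^ 2 := by nlinarith [abs_nonneg x, sq_abs x]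
    have h4 : K / (1 + |x|) ^ 2 ≤ K / (1 + x ^ 2) := div_le_div_of_nonneg_left hK h2 h3
    have h5 : K / (1 + x ^ 2) = K * (1 + x ^ 2)⁻¹ := div_eq_mul_inv K _
    linarith
  refine lt_of_le_of_lt hle ?_
  have : Integrable (fun x : ℝ => 2 * K * (1 + x ^ 2)⁻¹) volume :=
    integrable_inv_one_add_sq.const_mul (2 * K)
  exact this.lintegral_lt_top

lemma aux_vol' (t K : ℝ) (hK : 0 ≤ K) :
    volume {p : ℝ × ℝ | |p.1 - t * p.2| ≤ K / (1 + |p.2|) ^ 2} < ⊤ := by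
  have hmeas : MeasurableSet {p : ℝ × ℝ | |p.2 - t * p.1| ≤ K / (1 + |p.1|) ^ 2} := by
    apply measurableSet_le <;> fun_prop
  have hs : {p : ℝ × ℝ | |p.1 - t * p.2| ≤ K / (1 + |p.2|) ^ 2}
      = Prod.swap ⁻¹' {p : ℝ × ℝ | |p.2 - t * p.1| ≤ K / (1 + |p.1|) ^ 2} := by
    ext p; simp [Prod.swap]
  rw [hs]
  have hmp : MeasurePreserving (Prod.swap : ℝ × ℝ → ℝ × ℝ)
      ((volume : Measure ℝ).prod volume) ((volume : Measure ℝ).prod volume) :=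
    Measure.measurePreserving_swap
  have hvol : (volume : Measure (ℝ × ℝ)) = (volume : Measure ℝ).prod volume := rfl
  rw [hvol, hmp.measure_preimage hmeas.nullMeasurableSet]
  exact lt_of_eq_of_lt (by rw [← hvol]) (aux_vol t K hK)

lemma pair_bound (a b a' b' : ℂ) (x y : ℝ) :
    ‖a * b' - a' * b‖ * max |x| |y|
      ≤ (‖a‖ + ‖a'‖ + ‖b‖ + ‖b'‖) *
        (‖a * x - b * y‖ + ‖a' * x - b' * y‖) := by
  set d := a * b' - a' * b with hd
  set L := a * (x:ℂ) - b * (y:ℂ) with hL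
  set L' := a' * (x:ℂ) - b' * (y:ℂ) with hL'
  set A := ‖a‖ + ‖a'‖ + ‖b‖ + ‖b'‖ with hA
  have hnn : 0 ≤ ‖d‖ := norm_nonneg _
  have hx : ‖d‖ * |x| ≤ A * (‖L‖ + ‖L'‖) := by
    have h1 : d * (x:ℂ) = b' * L - b * L' := by rw [hd, hL, hL']; ring
    calc ‖d‖ * |x| = ‖d * x‖ := by
          rw [norm_mul, Complex.norm_real, Real.norm_eq_abs]
      _ = ‖b' * L - b * L'‖ := by rw [h1]
      _ ≤ ‖b' * L‖ + ‖b * L'‖ := norm_sub_le _ _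
      _ = ‖b'‖ * ‖L‖ + ‖b‖ * ‖L'‖ := by
          rw [norm_mul, norm_mul]
      _ ≤ A * (‖L‖ + ‖L'‖) := by
          have := norm_nonneg L; have := norm_nonneg L'
          have := norm_nonneg a; have := norm_nonneg a'
          have := norm_nonneg b; have := norm_nonneg b'
          nlinarith
  have hy : ‖d‖ * |y| ≤ A * (‖L‖ + ‖L'‖) := by
    have h1 : d * (y:ℂ) = a' * L - a * L' := by rw [hd, hL, hL']; ring
    calc ‖d‖ * |y| = ‖d * y‖ := by
          rw [norm_mul, Complex.norm_real, Real.norm_eq_abs]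
      _ = ‖a' * L - a * L'‖ := by rw [h1]
      _ ≤ ‖a' * L‖ + ‖a * L'‖ := norm_sub_le _ _
      _ = ‖a'‖ * ‖L‖ + ‖a‖ * ‖L'‖ := by
          rw [norm_mul, norm_mul]
      _ ≤ A * (‖L‖ + ‖L'‖) := by
          have := norm_nonneg L; have := norm_nonneg L'
          have := norm_nonneg a; have := norm_nonneg a'
          have := norm_nonneg b; have := norm_nonneg b'
          nlinarith
  rw [mul_max_of_nonneg _ _ hnn]
  exact max_le hx hy

lemma arith_step (c m B v w : ℝ) (hc : 0 < c) (hm : 0 < m) (hB : 0 < B)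
    (h1 : 1 + w ≤ 2 * m) (hw : 0 ≤ w)
    (hv : v ≤ 4 / (c ^ 2 * m ^ 2 * B)) :
    v ≤ (16 / (c ^ 2 * B)) / (1 + w) ^ 2 := by
  have h2 : (0:ℝ) < (1 + w) ^ 2 := by positivity
  have h3 : (1 + w) ^ 2 ≤ 4 * m ^ 2 := by nlinarith
  have h4 : (16 / (c ^ 2 * B)) / (4 * m ^ 2) = 4 / (c ^ 2 * m ^ 2 * B) := by
    field_simp; ring
  have h5 := div_le_div_of_nonneg_left (by positivity : (0:ℝ) ≤ 16 / (c ^ 2 * B)) h2 h3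
  rw [h4] at h5
  linarith

set_option maxHeartbeats 1600000 in
/-- Let `F = ∏ i, (α i X - β i Y)` be a binary form with complex coefficients, of degree
`n ≥ 3`, with nonzero discriminant.  Then the area of `{(x,y) ∈ ℝ² : |F(x,y)| ≤ 1}` is
finite. -/
theorem area_finite (n : ℕ) (hn : 3 ≤ n) (α β : Fin n → ℂ) (hD : discPair α β ≠ 0) :
    volume {p : ℝ × ℝ | ‖∏ i, (α i * (p.1 : ℂ) - β i * (p.2 : ℂ))‖ ≤ 1}
      < ⊤ := by
  classical
  -- all cross-determinants are nonzero
  have hdlt : ∀ i j : Fin n, i < j → α i * β j - α j * β i ≠ 0 := by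
    intro i j hij h0
    apply hD
    unfold discPair
    apply Finset.prod_eq_zero (Finset.mem_univ i)
    apply Finset.prod_eq_zero (Finset.mem_Ioi.mpr hij)
    rw [h0]; ring
  have hd : ∀ i j : Fin n, i ≠ j → α i * β j - α j * β i ≠ 0 := by
    intro i j hij
    rcases lt_or_gt_of_ne hij with h | h
    · exact hdlt i j h
    · intro h0
      apply hdlt j i h
      have : α j * β i - α i * β j = -(α i * β j - α j * β i) := by ring
      rw [this, h0, neg_zero]
  -- the denominators are positive
  have hA : ∀ i j : Fin n, i ≠ j →
      0 < ‖α i‖ + ‖α j‖ + ‖β i‖ + ‖β j‖ := by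
    intro i j hij
    by_contra h
    push_neg at h
    have n1 := norm_nonneg (α i); have n2 := norm_nonneg (α j)
    have n3 := norm_nonneg (β i); have n4 := norm_nonneg (β j)
    have e1 : α i = 0 := by
      rw [← norm_eq_zero]; linarith
    have e3 : β i = 0 := by
      rw [← norm_eq_zero]; linarith
    exact hd i j hij (by rw [e1, e3]; ring)
  -- the uniform constant c
  set f : Fin n × Fin n → ℝ := fun q =>
    ‖α q.1 * β q.2 - α q.2 * β q.1‖ /
      (‖α q.1‖ + ‖α q.2‖ + ‖β q.1‖ + ‖β q.2‖)
    with hf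
  have hne : (Finset.univ.offDiag : Finset (Fin n × Fin n)).Nonempty := by
    refine ⟨(⟨0, by omega⟩, ⟨1, by omega⟩), Finset.mem_offDiag.mpr ⟨Finset.mem_univ _,
      Finset.mem_univ _, ?_⟩⟩
    intro h
    have := congrArg Fin.val h
    simp at this
  obtain ⟨q0, hq0mem, hq0min⟩ := Finset.exists_min_image _ f hne
  have hq0 : q0.1 ≠ q0.2 := (Finset.mem_offDiag.mp hq0mem).2.2
  set c := f q0 with hcdef
  have hc0 : 0 < c := by
    rw [hcdef, hf]
    exact div_pos (norm_pos_iff.mpr (hd _ _ hq0)) (hA _ _ hq0)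
  have hc : ∀ i j : Fin n, i ≠ j → ∀ x y : ℝ,
      c * max |x| |y| ≤ ‖α i * x - β i * y‖ + ‖α j * x - β j * y‖ := by
    intro i j hij x y
    have hmem : (i, j) ∈ (Finset.univ.offDiag : Finset (Fin n × Fin n)) :=
      Finset.mem_offDiag.mpr ⟨Finset.mem_univ _, Finset.mem_univ _, hij⟩
    have h1 : c ≤ f (i, j) := hq0min _ hmem
    have hApos := hA i j hij
    have hpb := pair_bound (α i) (β i) (α j) (β j) x y
    have hmax : (0:ℝ) ≤ max |x| |y| := le_trans (abs_nonneg x) (le_max_left _ _)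
    have h2 : f (i, j) * max |x| |y|
        ≤ ‖α i * x - β i * y‖ + ‖α j * x - β j * y‖ := by
      rw [hf]
      rw [div_mul_eq_mul_div, div_le_iff₀ hApos]
      calc ‖α i * β j - α j * β i‖ * max |x| |y|
          ≤ (‖α i‖ + ‖α j‖ + ‖β i‖ + ‖β j‖) *
            (‖α i * x - β i * y‖ + ‖α j * x - β j * y‖) := hpb
        _ = (‖α i * x - β i * y‖ + ‖α j * x - β j * y‖) *
            (‖α i‖ + ‖α j‖ + ‖β i‖ + ‖β j‖) := by
            ring
    exact le_trans (mul_le_mul_of_nonneg_right h1 hmax) h2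
  -- the pieces
  set R := max 1 (2 / c) with hRdef
  set Box : Set (ℝ × ℝ) := Set.Icc (-R, -R) (R, R) with hBox
  set V : Fin n → Set (ℝ × ℝ) := fun i =>
    if α i = 0 then
      {p : ℝ × ℝ | |p.2 - 0 * p.1| ≤ (16 / (c ^ 2 * ‖β i‖)) / (1 + |p.1|) ^ 2}
    else
      {p : ℝ × ℝ | |p.1 - ((β i / α i).re) * p.2|
        ≤ (16 / (c ^ 2 * ‖α i‖)) / (1 + |p.2|) ^ 2} with hV
  -- the main inclusion
  have hincl : {p : ℝ × ℝ | ‖∏ i, (α i * (p.1 : ℂ) - β i * (p.2 : ℂ))‖ ≤ 1}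
      ⊆ Box ∪ ⋃ i, V i := by
    intro p hp
    by_cases hbox : p ∈ Box
    · exact Set.mem_union_left _ hbox
    right
    simp only [Set.mem_setOf_eq] at hp
    set m := max |p.1| |p.2| with hm
    have hmR : R < m := by
      by_contra h
      push_neg at h
      apply hbox
      have h1 : |p.1| ≤ R := le_trans (le_max_left _ _) h
      have h2 : |p.2| ≤ R := le_trans (le_max_right _ _) h
      rw [hBox, Set.mem_Icc]
      refine ⟨Prod.le_def.mpr ⟨?_, ?_⟩, Prod.le_def.mpr ⟨?_, ?_⟩⟩
      · exact (abs_le.mp h1).1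
      · exact (abs_le.mp h2).1
      · exact (abs_le.mp h1).2
      · exact (abs_le.mp h2).2
    have hR1 : (1:ℝ) ≤ R := le_max_left _ _
    have hRc : 2 / c ≤ R := le_max_right _ _
    have hm0 : 0 < m := lt_of_lt_of_le zero_lt_one (le_trans hR1 hmR.le)
    have hm1 : 1 ≤ c * m / 2 := by
      have : 2 / c ≤ m := le_trans hRc hmR.le
      rw [div_le_iff₀ hc0] at this
      linarith
    -- find the (at most one) bad index
    set bad := Finset.univ.filter
      (fun i => ‖α i * (p.1:ℂ) - β i * (p.2:ℂ)‖ < c * m / 2) with hbad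
    have hcard : bad.card ≤ 1 := by
      rw [Finset.card_le_one]
      intro a ha b hb
      by_contra hab
      simp only [hbad, Finset.mem_filter] at ha hb
      have h2 := hc a b hab p.1 p.2
      rw [← hm] at h2
      linarith [ha.2, hb.2]
    have hex : ∃ i : Fin n, ∀ j, j ≠ i →
        c * m / 2 ≤ ‖α j * (p.1:ℂ) - β j * (p.2:ℂ)‖ := by
      rcases Finset.eq_empty_or_nonempty bad with hbe | ⟨i, hi⟩
      · refine ⟨⟨0, by omega⟩, fun j _ => ?_⟩
        by_contra h
        push_neg at h
        have : j ∈ bad := Finset.mem_filter.mpr ⟨Finset.mem_univ _, h⟩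
        rw [hbe] at this
        exact absurd this (Finset.notMem_empty j)
      · refine ⟨i, fun j hj => ?_⟩
        by_contra h
        push_neg at h
        have hjb : j ∈ bad := Finset.mem_filter.mpr ⟨Finset.mem_univ _, h⟩
        exact hj (Finset.card_le_one.mp hcard j hjb i hi)
    obtain ⟨i, hi⟩ := hex
    -- the product lower bound
    have habs : ‖∏ j, (α j * (p.1:ℂ) - β j * (p.2:ℂ))‖
        = ∏ j, ‖α j * (p.1:ℂ) - β j * (p.2:ℂ)‖ := norm_prod _ _
    have hprod : ‖α i * (p.1:ℂ) - β i * (p.2:ℂ)‖ * (c * m / 2) ^ (n - 1)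
        ≤ ∏ j, ‖α j * (p.1:ℂ) - β j * (p.2:ℂ)‖ := by
      rw [← Finset.mul_prod_erase Finset.univ _ (Finset.mem_univ i)]
      apply mul_le_mul_of_nonneg_left _ (norm_nonneg _)
      have hcd : (Finset.univ.erase i).card = n - 1 := by
        rw [Finset.card_erase_of_mem (Finset.mem_univ i), Finset.card_univ, Fintype.card_fin]
      calc (c * m / 2) ^ (n - 1)
          = ∏ _j ∈ Finset.univ.erase i, (c * m / 2) := by rw [Finset.prod_const, hcd]
        _ ≤ ∏ j ∈ Finset.univ.erase i, ‖α j * (p.1:ℂ) - β j * (p.2:ℂ)‖ := by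
            apply Finset.prod_le_prod
            · intro j _; linarith
            · intro j hj; exact hi j (Finset.ne_of_mem_erase hj)
    have hpow : (c * m / 2) ^ 2 ≤ (c * m / 2) ^ (n - 1) :=
      pow_le_pow_right₀ hm1 (by omega)
    have hLi : ‖α i * (p.1:ℂ) - β i * (p.2:ℂ)‖ ≤ 4 / (c ^ 2 * m ^ 2) := by
      have h1 : ‖α i * (p.1:ℂ) - β i * (p.2:ℂ)‖ * (c * m / 2) ^ 2 ≤ 1 := by
        calc ‖α i * (p.1:ℂ) - β i * (p.2:ℂ)‖ * (c * m / 2) ^ 2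
            ≤ ‖α i * (p.1:ℂ) - β i * (p.2:ℂ)‖ * (c * m / 2) ^ (n - 1) :=
              mul_le_mul_of_nonneg_left hpow (norm_nonneg _)
          _ ≤ ∏ j, ‖α j * (p.1:ℂ) - β j * (p.2:ℂ)‖ := hprod
          _ = ‖∏ j, (α j * (p.1:ℂ) - β j * (p.2:ℂ))‖ := habs.symm
          _ ≤ 1 := hp
      have h2 : (0:ℝ) < c ^ 2 * m ^ 2 := by positivity
      rw [le_div_iff₀ h2]
      nlinarith [norm_nonneg (α i * (p.1:ℂ) - β i * (p.2:ℂ))]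
    -- conclude membership in V i
    apply Set.mem_iUnion.mpr ⟨i, _⟩
    rw [hV]
    by_cases hαi : α i = 0
    · -- β i ≠ 0
      have hβi : β i ≠ 0 := by
        intro h0
        obtain ⟨j, hj⟩ := Fintype.exists_ne_of_one_lt_card (by simp; omega) i
        exact hd i j (Ne.symm hj) (by rw [hαi, h0]; ring)
      simp only [hαi, if_true]
      show |p.2 - 0 * p.1| ≤ (16 / (c ^ 2 * ‖β i‖)) / (1 + |p.1|) ^ 2
      rw [zero_mul, sub_zero]
      have hB : 0 < ‖β i‖ := norm_pos_iff.mpr hβi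
      have heq : ‖α i * (p.1:ℂ) - β i * (p.2:ℂ)‖ = ‖β i‖ * |p.2| := by
        have : α i * (p.1:ℂ) - β i * (p.2:ℂ) = -(β i * (p.2:ℂ)) := by rw [hαi]; ring
        rw [this, norm_neg, norm_mul, Complex.norm_real, Real.norm_eq_abs]
      have hv : |p.2| ≤ 4 / (c ^ 2 * m ^ 2 * ‖β i‖) := by
        rw [heq] at hLi
        rw [le_div_iff₀ (by positivity)]
        rw [le_div_iff₀ (by positivity : (0:ℝ) < c ^ 2 * m ^ 2)] at hLi
        nlinarith
      have h2m : 1 + |p.1| ≤ 2 * m := by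
        have := le_max_left |p.1| |p.2|
        rw [← hm] at this
        linarith
      exact arith_step c m (‖β i‖) |p.2| |p.1| hc0 hm0 hB h2m (abs_nonneg _) hv
    · simp only [hαi, if_false]
      show |p.1 - ((β i / α i).re) * p.2| ≤ (16 / (c ^ 2 * ‖α i‖)) / (1 + |p.2|) ^ 2
      have hB : 0 < ‖α i‖ := norm_pos_iff.mpr hαi
      have heq : ‖α i * (p.1:ℂ) - β i * (p.2:ℂ)‖
          = ‖α i‖ * ‖(p.1:ℂ) - (β i / α i) * (p.2:ℂ)‖ := by
        rw [← norm_mul]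
        congr 1
        field_simp
      have hre : ((p.1:ℂ) - (β i / α i) * (p.2:ℂ)).re = p.1 - (β i / α i).re * p.2 := by
        simp [Complex.sub_re, Complex.mul_re]
      have hre2 : |p.1 - (β i / α i).re * p.2| ≤ ‖(p.1:ℂ) - (β i / α i) * (p.2:ℂ)‖ := by
        rw [← hre]
        exact Complex.abs_re_le_norm _
      have hv : |p.1 - (β i / α i).re * p.2| ≤ 4 / (c ^ 2 * m ^ 2 * ‖α i‖) := by
        rw [heq] at hLi
        rw [le_div_iff₀ (by positivity)]
        rw [le_div_iff₀ (by positivity : (0:ℝ) < c ^ 2 * m ^ 2)] at hLi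
        calc |p.1 - (β i / α i).re * p.2| * (c ^ 2 * m ^ 2 * ‖α i‖)
            ≤ ‖(p.1:ℂ) - (β i / α i) * (p.2:ℂ)‖ *
              (c ^ 2 * m ^ 2 * ‖α i‖) :=
              mul_le_mul_of_nonneg_right hre2 (by positivity)
          _ = ‖α i‖ * ‖(p.1:ℂ) - (β i / α i) * (p.2:ℂ)‖ *
              (c ^ 2 * m ^ 2) := by ring
          _ ≤ 4 := hLi
      have h2m : 1 + |p.2| ≤ 2 * m := by
        have := le_max_right |p.1| |p.2|
        rw [← hm] at this
        linarith
      exact arith_step c m (‖α i‖) _ |p.2| hc0 hm0 hB h2m (abs_nonneg _) hv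
  -- finish with measure estimates
  calc volume {p : ℝ × ℝ | ‖∏ i, (α i * (p.1 : ℂ) - β i * (p.2 : ℂ))‖ ≤ 1}
      ≤ volume (Box ∪ ⋃ i, V i) := measure_mono hincl
    _ ≤ volume Box + volume (⋃ i, V i) := measure_union_le _ _
    _ < ⊤ := by
        apply ENNReal.add_lt_top.mpr
        constructor
        · exact (isCompact_Icc).measure_lt_top
        · refine lt_of_le_of_lt (measure_iUnion_le V) ?_
          rw [tsum_fintype]
          apply ENNReal.sum_lt_top.mpr
          intro i _
          rw [hV]
          by_cases hαi : α i = 0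
          · simp only [hαi, if_true]
            exact aux_vol 0 _ (by positivity)
          · simp only [hαi, if_false]
            exact aux_vol' _ _ (by positivity)
end

section
/- The discriminant of the binary cubic form F(X,Y) = XY(X−Y) equals 1, and hence |D_F|^{1/(3·2)} · A_F = 3·B(1/3,1/3) for this form, where A_F is the area of {(x,y) ∈ ℝ² : |xy(x−y)| ≤ 1} and B denotes the Beta function. -/
open MeasureTheory Finset
open scoped ENNReal

section Aux

noncomputable def mkL (a b c d : ℝ) : ℝ × ℝ →ₗ[ℝ] ℝ × ℝ where
  toFun p := (a * p.1 + b * p.2, c * p.1 + d * p.2)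
  map_add' p q := by simp [Prod.ext_iff]; constructor <;> ring
  map_smul' r p := by simp [Prod.ext_iff, smul_eq_mul]; constructor <;> ring

theorem mkL_det (a b c d : ℝ) : LinearMap.det (mkL a b c d) = a * d - b * c := by
  rw [← LinearMap.det_toMatrix (Module.Basis.finTwoProd ℝ)]
  have : (LinearMap.toMatrix (Module.Basis.finTwoProd ℝ) (Module.Basis.finTwoProd ℝ) (mkL a b c d)) =
      !![a, b; c, d] := by
    ext i j
    fin_cases i <;> fin_cases j <;>
      simp [LinearMap.toMatrix_apply, mkL, Module.Basis.finTwoProd]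
  rw [this, Matrix.det_fin_two_of]

theorem vol_image_mkL {a b c d : ℝ} (h : a * d - b * c = 1 ∨ a * d - b * c = -1)
    (s : Set (ℝ × ℝ)) : volume (mkL a b c d '' s) = volume s := by
  rw [Measure.addHaar_image_linearMap, mkL_det]
  rcases h with h | h <;> rw [h] <;> norm_num

noncomputable def mkC (a b c d : ℝ) : ℝ × ℝ →L[ℝ] ℝ × ℝ :=
  (mkL a b c d).toContinuousLinearMap

def Kset : Set (ℝ × ℝ) := {p | 0 < p.1 ∧ 0 < p.2 ∧ p.1 * p.2 * (p.1 + p.2) ≤ 1}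
def Aset : Set (ℝ × ℝ) := {q | 0 < q.1 ∧ 0 < q.2 ∧ q.2 < 1 ∧ q.1 ^ 3 * (q.2 * (1 - q.2)) ≤ 1}
def Phi : ℝ × ℝ → ℝ × ℝ := fun q => (q.1 * q.2, q.1 * (1 - q.2))

theorem Phi_deriv (q : ℝ × ℝ) :
    HasFDerivAt Phi (mkC q.2 q.1 (1 - q.2) (-q.1)) q := by
  have h1 : HasFDerivAt (fun p : ℝ × ℝ => p.1 * p.2)
      (q.1 • (ContinuousLinearMap.snd ℝ ℝ ℝ) + q.2 • (ContinuousLinearMap.fst ℝ ℝ ℝ)) q :=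
    hasFDerivAt_fst.mul hasFDerivAt_snd
  have h2 : HasFDerivAt (fun p : ℝ × ℝ => p.1 * (1 - p.2))
      (q.1 • ((0 : ℝ × ℝ →L[ℝ] ℝ) - ContinuousLinearMap.snd ℝ ℝ ℝ)
        + (1 - q.2) • (ContinuousLinearMap.fst ℝ ℝ ℝ)) q :=
    hasFDerivAt_fst.mul ((hasFDerivAt_const (1:ℝ) q).sub hasFDerivAt_snd)
  have := h1.prodMk h2
  refine this.congr_fderiv ?_
  ext p <;> simp [mkC, mkL] <;> ring

theorem detC (a b c d : ℝ) : (mkC a b c d).det = a * d - b * c := by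
  rw [ContinuousLinearMap.det, mkC, LinearMap.coe_toContinuousLinearMap, mkL_det]

theorem Aset_meas : MeasurableSet Aset := by
  apply MeasurableSet.inter
  · exact measurableSet_lt measurable_const measurable_fst
  apply MeasurableSet.inter
  · exact measurableSet_lt measurable_const measurable_snd
  apply MeasurableSet.inter
  · exact measurableSet_lt measurable_snd measurable_const
  · exact measurableSet_le
      ((measurable_fst.pow_const 3).mul
        (measurable_snd.mul (measurable_const.sub measurable_snd))) measurable_const

theorem Phi_inj : Set.InjOn Phi Aset := by
  rintro ⟨s, t⟩ ⟨hs, ht, ht1, _⟩ ⟨s', t'⟩ ⟨hs', ht', ht1', _⟩ h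
  simp only [Phi, Prod.ext_iff] at h ⊢
  obtain ⟨h1, h2⟩ := h
  have hss : s = s' := by nlinarith
  refine ⟨hss, ?_⟩
  subst hss
  have : s * t = s * t' := h1
  exact mul_left_cancel₀ (ne_of_gt hs) this

theorem Phi_image : Phi '' Aset = Kset := by
  ext ⟨x, y⟩
  constructor
  · rintro ⟨⟨s, t⟩, ⟨hs, ht, ht1, hle⟩, heq⟩
    simp only [Phi, Prod.mk.injEq] at heq hs ht ht1 hle
    obtain ⟨hx, hy⟩ := heq
    subst hx; subst hy
    have h1t : (0:ℝ) < 1 - t := by linarith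
    refine ⟨by positivity, mul_pos hs h1t, ?_⟩
    have : s * t * (s * (1 - t)) * (s * t + s * (1 - t)) = s ^ 3 * (t * (1 - t)) := by ring
    simpa [this] using hle
  · rintro ⟨hx, hy, hle⟩
    refine ⟨(x + y, x / (x + y)), ⟨by positivity, by positivity, ?_, ?_⟩, ?_⟩
    · rw [div_lt_one (by positivity)]; linarith
    · have hxy : (0:ℝ) < x + y := by positivity
      have : (x + y) ^ 3 * (x / (x + y) * (1 - x / (x + y))) = x * y * (x + y) := by
        field_simp; ring
      rw [this]; exact hle
    · have hxy : (0:ℝ) < x + y := by positivity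
      simp only [Phi, Prod.mk.injEq]
      refine ⟨by field_simp, ?_⟩
      field_simp; ring

theorem volK : volume Kset = ∫⁻ q in Aset, ENNReal.ofReal q.1 := by
  rw [← Phi_image, ← MeasureTheory.lintegral_abs_det_fderiv_eq_addHaar_image volume Aset_meas
    (fun q _ => (Phi_deriv q).hasFDerivWithinAt) Phi_inj]
  apply MeasureTheory.setLIntegral_congr_fun Aset_meas
  intro q hq
  beta_reduce
  rw [detC]
  congr 1
  have h1 : q.2 * -q.1 - q.1 * (1 - q.2) = -q.1 := by ring
  rw [h1, abs_neg, abs_of_pos hq.1]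


noncomputable def bfun (t : ℝ) : ℝ := t ^ (-(2:ℝ)/3) * (1 - t) ^ (-(2:ℝ)/3)

theorem cexp_eq : (1/3 : ℂ) - 1 = ((-(2:ℝ)/3 : ℝ) : ℂ) := by push_cast; norm_num

theorem cfun_eq {x : ℝ} (hx : x ∈ Set.Icc (0:ℝ) 1) :
    (x:ℂ) ^ ((1/3:ℂ) - 1) * (1 - (x:ℂ)) ^ ((1/3:ℂ) - 1) = ((bfun x : ℝ) : ℂ) := by
  obtain ⟨h0, h1⟩ := hx
  rw [cexp_eq, ← Complex.ofReal_cpow h0, ← Complex.ofReal_one, ← Complex.ofReal_sub,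
    ← Complex.ofReal_cpow (by linarith), ← Complex.ofReal_mul, bfun]

theorem beta_integrable : IntervalIntegrable bfun volume 0 1 := by
  have hC : IntervalIntegrable
      (fun x : ℝ => (x:ℂ) ^ ((1/3:ℂ) - 1) * (1 - (x:ℂ)) ^ ((1/3:ℂ) - 1)) volume 0 1 :=
    Complex.betaIntegral_convergent (by norm_num) (by norm_num)
  rw [intervalIntegrable_iff_integrableOn_Ioc_of_le (by norm_num)] at hC ⊢
  apply (hC.re).congr
  filter_upwards [ae_restrict_mem measurableSet_Ioc] with x hx
  rw [cfun_eq ⟨le_of_lt hx.1, hx.2⟩]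
  simp

theorem beta_value : ∫ t in (0:ℝ)..1, bfun t = Beta (1/3) (1/3) := by
  have key := Complex.Gamma_mul_Gamma_eq_betaIntegral
    (s := 1/3) (t := 1/3) (by norm_num [Complex.div_re]) (by norm_num [Complex.div_re])
  have hint : Complex.betaIntegral (1/3) (1/3) = ((∫ t in (0:ℝ)..1, bfun t : ℝ) : ℂ) := by
    rw [Complex.betaIntegral, ← intervalIntegral.integral_ofReal]
    apply intervalIntegral.integral_congr
    intro x hx
    rw [Set.uIcc_of_le (by norm_num)] at hx
    exact cfun_eq hx
  rw [hint] at key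
  have h13 : (1/3 : ℂ) = ((1/3 : ℝ) : ℂ) := by norm_num
  have h23 : ((1/3 : ℝ) : ℂ) + ((1/3 : ℝ) : ℂ) = ((2/3 : ℝ) : ℂ) := by push_cast; norm_num
  rw [h13, h23, Complex.Gamma_ofReal, Complex.Gamma_ofReal, ← Complex.ofReal_mul,
    ← Complex.ofReal_mul] at key
  have key' := Complex.ofReal_inj.mp key
  have hG : Real.Gamma (2/3) ≠ 0 := ne_of_gt (Real.Gamma_pos_of_pos (by norm_num))
  rw [Beta]
  norm_num at key' ⊢
  rw [eq_div_iff hG]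
  linarith [key']


noncomputable def cfn (t : ℝ) : ℝ := (t * (1 - t)) ^ (-(1:ℝ)/3)

theorem cfn_pos {t : ℝ} (ht : t ∈ Set.Ioo (0:ℝ) 1) : 0 < cfn t := by
  have : 0 < t * (1 - t) := mul_pos ht.1 (by linarith [ht.2])
  exact Real.rpow_pos_of_pos this _

theorem cfn_cube {t : ℝ} (ht : t ∈ Set.Ioo (0:ℝ) 1) : (cfn t) ^ 3 * (t * (1 - t)) = 1 := by
  have h : 0 < t * (1 - t) := mul_pos ht.1 (by linarith [ht.2])
  rw [cfn, ← Real.rpow_natCast ((t * (1-t)) ^ (-(1:ℝ)/3)) 3, ← Real.rpow_mul h.le]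
  norm_num
  rw [Real.rpow_neg_one]
  field_simp
  exact div_self h.ne'

theorem cfn_sq {t : ℝ} (ht : t ∈ Set.Ioo (0:ℝ) 1) : (cfn t) ^ 2 = bfun t := by
  have h : 0 < t * (1 - t) := mul_pos ht.1 (by linarith [ht.2])
  rw [cfn, ← Real.rpow_natCast ((t * (1-t)) ^ (-(1:ℝ)/3)) 2, ← Real.rpow_mul h.le, bfun,
    ← Real.mul_rpow ht.1.le (by linarith [ht.2])]
  norm_num

theorem Aset_eq : Aset = {q : ℝ × ℝ | q.2 ∈ Set.Ioo (0:ℝ) 1 ∧ q.1 ∈ Set.Ioc 0 (cfn q.2)} := by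
  ext ⟨s, t⟩
  simp only [Aset, Set.mem_setOf_eq, Set.mem_Ioo, Set.mem_Ioc]
  constructor
  · rintro ⟨hs, ht, ht1, hle⟩
    refine ⟨⟨ht, ht1⟩, hs, ?_⟩
    have hc := cfn_pos ⟨ht, ht1⟩
    have hcc := cfn_cube ⟨ht, ht1⟩
    have htt : 0 < t * (1 - t) := mul_pos ht (by linarith)
    by_contra hgt
    push_neg at hgt
    have h3 : (cfn t) ^ 3 < s ^ 3 := by
      apply pow_lt_pow_left₀ hgt hc.le (by norm_num)
    nlinarith
  · rintro ⟨⟨ht, ht1⟩, hs, hle⟩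
    refine ⟨hs, ht, ht1, ?_⟩
    have hcc := cfn_cube ⟨ht, ht1⟩
    have htt : 0 < t * (1 - t) := mul_pos ht (by linarith)
    have h3 : s ^ 3 ≤ (cfn t) ^ 3 := by
      apply pow_le_pow_left₀ hs.le hle
    nlinarith

theorem inner_int {c : ℝ} (hc : 0 < c) :
    ∫⁻ s in Set.Ioc (0:ℝ) c, ENNReal.ofReal s = ENNReal.ofReal (c ^ 2 / 2) := by
  rw [← ofReal_integral_eq_lintegral_ofReal]
  · congr 1
    rw [← intervalIntegral.integral_of_le hc.le, integral_id]
    ring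
  · exact (continuous_id.integrableOn_Ioc)
  · filter_upwards [ae_restrict_mem measurableSet_Ioc] with s hs
    exact hs.1.le

theorem volA_eq : ∫⁻ q in Aset, ENNReal.ofReal q.1 = ENNReal.ofReal (Beta (1/3) (1/3) / 2) := by
  have hmeasf : Measurable fun q : ℝ × ℝ => Set.indicator Aset (fun q : ℝ × ℝ => ENNReal.ofReal q.1) q :=
    (measurable_fst.ennreal_ofReal).indicator Aset_meas
  rw [← lintegral_indicator Aset_meas, Measure.volume_eq_prod, lintegral_prod_symm _ hmeasf.aemeasurable]
  have step : ∀ t : ℝ, (∫⁻ s, Set.indicator Aset (fun q : ℝ × ℝ => ENNReal.ofReal q.1) (s, t))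
      = Set.indicator (Set.Ioo (0:ℝ) 1) (fun t => ENNReal.ofReal (bfun t / 2)) t := by
    intro t
    by_cases ht : t ∈ Set.Ioo (0:ℝ) 1
    · rw [Set.indicator_of_mem ht]
      have : ∀ s : ℝ, Set.indicator Aset (fun q : ℝ × ℝ => ENNReal.ofReal q.1) (s, t)
          = Set.indicator (Set.Ioc (0:ℝ) (cfn t)) (fun s => ENNReal.ofReal s) s := by
        intro s
        by_cases hs : s ∈ Set.Ioc (0:ℝ) (cfn t)
        · rw [Set.indicator_of_mem hs, Set.indicator_of_mem]
          rw [Aset_eq]; exact ⟨ht, hs⟩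
        · rw [Set.indicator_of_notMem hs, Set.indicator_of_notMem]
          rw [Aset_eq]
          intro hmem
          exact hs hmem.2
      simp_rw [this]
      rw [lintegral_indicator measurableSet_Ioc, inner_int (cfn_pos ht), cfn_sq ht]
    · rw [Set.indicator_of_notMem ht]
      have : ∀ s : ℝ, Set.indicator Aset (fun q : ℝ × ℝ => ENNReal.ofReal q.1) (s, t) = 0 := by
        intro s
        apply Set.indicator_of_notMem
        rw [Aset_eq]
        intro hmem
        exact ht hmem.1
      simp_rw [this]
      exact lintegral_zero
  simp_rw [step]
  rw [lintegral_indicator measurableSet_Ioo, ← ofReal_integral_eq_lintegral_ofReal]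
  · congr 1
    rw [← MeasureTheory.integral_Ioc_eq_integral_Ioo, ← intervalIntegral.integral_of_le
      (by norm_num : (0:ℝ) ≤ 1)]
    rw [intervalIntegral.integral_div, beta_value]
  · exact ((beta_integrable.1).mono_set Set.Ioo_subset_Ioc_self).div_const 2
  · filter_upwards [ae_restrict_mem measurableSet_Ioo] with t ht
    have h1 : (0:ℝ) ≤ t ^ (-(2:ℝ)/3) := Real.rpow_nonneg ht.1.le _
    have h2 : (0:ℝ) ≤ (1-t) ^ (-(2:ℝ)/3) := Real.rpow_nonneg (by linarith [ht.2]) _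
    have : 0 ≤ bfun t := mul_nonneg h1 h2
    positivity



def Sset : Set (ℝ × ℝ) := {p | |p.1 * p.2 * (p.1 - p.2)| ≤ 1}

def T1 : Set (ℝ × ℝ) := {p | 0 < p.2 ∧ p.2 < p.1}
def T2 : Set (ℝ × ℝ) := {p | 0 < p.1 ∧ p.1 < p.2}
def T3 : Set (ℝ × ℝ) := {p | p.2 < 0 ∧ 0 < p.1}
def T4 : Set (ℝ × ℝ) := {p | p.1 < 0 ∧ 0 < p.2}
def T5 : Set (ℝ × ℝ) := {p | p.1 < p.2 ∧ p.2 < 0}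
def T6 : Set (ℝ × ℝ) := {p | p.2 < p.1 ∧ p.1 < 0}

theorem sec1_s18 : Sset ∩ T1 = mkL 1 1 0 1 '' Kset := by
  ext ⟨x, y⟩
  constructor
  · rintro ⟨hS, h1, h2⟩
    simp only [Sset, Set.mem_setOf_eq] at hS
    rw [abs_of_nonneg (by nlinarith [mul_nonneg (mul_nonneg (show (0:ℝ) ≤ x by linarith) (show (0:ℝ) ≤ y by linarith)) (show (0:ℝ) ≤ x - y by linarith)])] at hS
    refine ⟨(x - y, y), ⟨?_, ?_, ?_⟩, ?_⟩
    · show (0:ℝ) < x - y; linarith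
    · show (0:ℝ) < y; linarith
    · show (x - y) * (y) * ((x - y) + (y)) ≤ 1; nlinarith [hS]
    · simp only [mkL, LinearMap.coe_mk, AddHom.coe_mk, Prod.mk.injEq]
      constructor <;> ring
  · rintro ⟨⟨a, b⟩, ⟨ha, hb, hle⟩, heq⟩
    simp only [mkL, LinearMap.coe_mk, AddHom.coe_mk, Prod.mk.injEq] at heq
    obtain ⟨hx, hy⟩ := heq
    have hab : (0:ℝ) ≤ a * b * (a + b) := by positivity
    have key : |x * y * (x - y)| ≤ 1 := by
      rw [← hx, ← hy]
      rw [abs_of_nonneg (by nlinarith [hab])]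
      nlinarith [hle]
    refine ⟨key, ?_, ?_⟩
    · show 0 < y; linarith
    · show y < x; linarith

theorem sec2_s18 : Sset ∩ T2 = mkL 0 1 1 1 '' Kset := by
  ext ⟨x, y⟩
  constructor
  · rintro ⟨hS, h1, h2⟩
    simp only [Sset, Set.mem_setOf_eq] at hS
    rw [abs_of_nonpos (by nlinarith [mul_nonneg (mul_nonneg (show (0:ℝ) ≤ x by linarith) (show (0:ℝ) ≤ y by linarith)) (show (0:ℝ) ≤ y - x by linarith)])] at hS
    refine ⟨(y - x, x), ⟨?_, ?_, ?_⟩, ?_⟩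
    · show (0:ℝ) < y - x; linarith
    · show (0:ℝ) < x; linarith
    · show (y - x) * (x) * ((y - x) + (x)) ≤ 1; nlinarith [hS]
    · simp only [mkL, LinearMap.coe_mk, AddHom.coe_mk, Prod.mk.injEq]
      constructor <;> ring
  · rintro ⟨⟨a, b⟩, ⟨ha, hb, hle⟩, heq⟩
    simp only [mkL, LinearMap.coe_mk, AddHom.coe_mk, Prod.mk.injEq] at heq
    obtain ⟨hx, hy⟩ := heq
    have hab : (0:ℝ) ≤ a * b * (a + b) := by positivity
    have key : |x * y * (x - y)| ≤ 1 := by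
      rw [← hx, ← hy]
      rw [abs_of_nonpos (by nlinarith [hab])]
      nlinarith [hle]
    refine ⟨key, ?_, ?_⟩
    · show 0 < x; linarith
    · show x < y; linarith

theorem sec3_s18 : Sset ∩ T3 = mkL 1 0 0 (-1) '' Kset := by
  ext ⟨x, y⟩
  constructor
  · rintro ⟨hS, h1, h2⟩
    simp only [Sset, Set.mem_setOf_eq] at hS
    rw [abs_of_nonpos (by nlinarith [mul_nonneg (mul_nonneg (show (0:ℝ) ≤ x by linarith) (show (0:ℝ) ≤ -y by linarith)) (show (0:ℝ) ≤ x - y by linarith)])] at hS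
    refine ⟨(x, -y), ⟨?_, ?_, ?_⟩, ?_⟩
    · show (0:ℝ) < x; linarith
    · show (0:ℝ) < -y; linarith
    · show (x) * (-y) * ((x) + (-y)) ≤ 1; nlinarith [hS]
    · simp only [mkL, LinearMap.coe_mk, AddHom.coe_mk, Prod.mk.injEq]
      constructor <;> ring
  · rintro ⟨⟨a, b⟩, ⟨ha, hb, hle⟩, heq⟩
    simp only [mkL, LinearMap.coe_mk, AddHom.coe_mk, Prod.mk.injEq] at heq
    obtain ⟨hx, hy⟩ := heq
    have hab : (0:ℝ) ≤ a * b * (a + b) := by positivity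
    have key : |x * y * (x - y)| ≤ 1 := by
      rw [← hx, ← hy]
      rw [abs_of_nonpos (by nlinarith [hab])]
      nlinarith [hle]
    refine ⟨key, ?_, ?_⟩
    · show y < 0; linarith
    · show 0 < x; linarith

theorem sec4_s18 : Sset ∩ T4 = mkL (-1) 0 0 1 '' Kset := by
  ext ⟨x, y⟩
  constructor
  · rintro ⟨hS, h1, h2⟩
    simp only [Sset, Set.mem_setOf_eq] at hS
    rw [abs_of_nonneg (by nlinarith [mul_nonneg (mul_nonneg (show (0:ℝ) ≤ -x by linarith) (show (0:ℝ) ≤ y by linarith)) (show (0:ℝ) ≤ y - x by linarith)])] at hS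
    refine ⟨(-x, y), ⟨?_, ?_, ?_⟩, ?_⟩
    · show (0:ℝ) < -x; linarith
    · show (0:ℝ) < y; linarith
    · show (-x) * (y) * ((-x) + (y)) ≤ 1; nlinarith [hS]
    · simp only [mkL, LinearMap.coe_mk, AddHom.coe_mk, Prod.mk.injEq]
      constructor <;> ring
  · rintro ⟨⟨a, b⟩, ⟨ha, hb, hle⟩, heq⟩
    simp only [mkL, LinearMap.coe_mk, AddHom.coe_mk, Prod.mk.injEq] at heq
    obtain ⟨hx, hy⟩ := heq
    have hab : (0:ℝ) ≤ a * b * (a + b) := by positivity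
    have key : |x * y * (x - y)| ≤ 1 := by
      rw [← hx, ← hy]
      rw [abs_of_nonneg (by nlinarith [hab])]
      nlinarith [hle]
    refine ⟨key, ?_, ?_⟩
    · show x < 0; linarith
    · show 0 < y; linarith

theorem sec5_s18 : Sset ∩ T5 = mkL (-1) (-1) 0 (-1) '' Kset := by
  ext ⟨x, y⟩
  constructor
  · rintro ⟨hS, h1, h2⟩
    simp only [Sset, Set.mem_setOf_eq] at hS
    rw [abs_of_nonpos (by nlinarith [mul_nonneg (mul_nonneg (show (0:ℝ) ≤ -x by linarith) (show (0:ℝ) ≤ -y by linarith)) (show (0:ℝ) ≤ y - x by linarith)])] at hS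
    refine ⟨(y - x, -y), ⟨?_, ?_, ?_⟩, ?_⟩
    · show (0:ℝ) < y - x; linarith
    · show (0:ℝ) < -y; linarith
    · show (y - x) * (-y) * ((y - x) + (-y)) ≤ 1; nlinarith [hS]
    · simp only [mkL, LinearMap.coe_mk, AddHom.coe_mk, Prod.mk.injEq]
      constructor <;> ring
  · rintro ⟨⟨a, b⟩, ⟨ha, hb, hle⟩, heq⟩
    simp only [mkL, LinearMap.coe_mk, AddHom.coe_mk, Prod.mk.injEq] at heq
    obtain ⟨hx, hy⟩ := heq
    have hab : (0:ℝ) ≤ a * b * (a + b) := by positivity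
    have key : |x * y * (x - y)| ≤ 1 := by
      rw [← hx, ← hy]
      rw [abs_of_nonpos (by nlinarith [hab])]
      nlinarith [hle]
    refine ⟨key, ?_, ?_⟩
    · show x < y; linarith
    · show y < 0; linarith

theorem sec6_s18 : Sset ∩ T6 = mkL 0 (-1) (-1) (-1) '' Kset := by
  ext ⟨x, y⟩
  constructor
  · rintro ⟨hS, h1, h2⟩
    simp only [Sset, Set.mem_setOf_eq] at hS
    rw [abs_of_nonneg (by nlinarith [mul_nonneg (mul_nonneg (show (0:ℝ) ≤ -x by linarith) (show (0:ℝ) ≤ -y by linarith)) (show (0:ℝ) ≤ x - y by linarith)])] at hS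
    refine ⟨(x - y, -x), ⟨?_, ?_, ?_⟩, ?_⟩
    · show (0:ℝ) < x - y; linarith
    · show (0:ℝ) < -x; linarith
    · show (x - y) * (-x) * ((x - y) + (-x)) ≤ 1; nlinarith [hS]
    · simp only [mkL, LinearMap.coe_mk, AddHom.coe_mk, Prod.mk.injEq]
      constructor <;> ring
  · rintro ⟨⟨a, b⟩, ⟨ha, hb, hle⟩, heq⟩
    simp only [mkL, LinearMap.coe_mk, AddHom.coe_mk, Prod.mk.injEq] at heq
    obtain ⟨hx, hy⟩ := heq
    have hab : (0:ℝ) ≤ a * b * (a + b) := by positivity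
    have key : |x * y * (x - y)| ≤ 1 := by
      rw [← hx, ← hy]
      rw [abs_of_nonneg (by nlinarith [hab])]
      nlinarith [hle]
    refine ⟨key, ?_, ?_⟩
    · show y < x; linarith
    · show x < 0; linarith

theorem null_line (f : ℝ × ℝ →ₗ[ℝ] ℝ) (p₀ : ℝ × ℝ) (hp : f p₀ ≠ 0) :
    volume {p : ℝ × ℝ | f p = 0} = 0 := by
  have : {p : ℝ × ℝ | f p = 0} = (LinearMap.ker f : Set (ℝ × ℝ)) := by
    ext p; simp [LinearMap.mem_ker]
  rw [this]
  apply Measure.addHaar_submodule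
  intro h
  exact hp (by rw [← LinearMap.mem_ker, h]; trivial)

def Lfst : ℝ × ℝ →ₗ[ℝ] ℝ := LinearMap.fst ℝ ℝ ℝ
def Lsnd : ℝ × ℝ →ₗ[ℝ] ℝ := LinearMap.snd ℝ ℝ ℝ

theorem null_lines :
    volume ({p : ℝ × ℝ | p.1 = 0} ∪ {p | p.2 = 0} ∪ {p | p.1 = p.2}) = 0 := by
  apply measure_union_null
  apply measure_union_null
  · exact null_line Lfst (1, 0) (by norm_num [Lfst])
  · exact null_line Lsnd (0, 1) (by norm_num [Lsnd])
  · have : {p : ℝ × ℝ | p.1 = p.2} = {p : ℝ × ℝ | (Lfst - Lsnd) p = 0} := by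
      ext p; simp [Lfst, Lsnd, sub_eq_zero]
    rw [this]
    exact null_line (Lfst - Lsnd) (1, 0) (by norm_num [Lfst, Lsnd])

theorem T_meas : MeasurableSet T1 ∧ MeasurableSet T2 ∧ MeasurableSet T3 ∧ MeasurableSet T4
    ∧ MeasurableSet T5 ∧ MeasurableSet T6 := by
  refine ⟨(measurableSet_lt measurable_const measurable_snd).inter
      (measurableSet_lt measurable_snd measurable_fst),
    (measurableSet_lt measurable_const measurable_fst).inter
      (measurableSet_lt measurable_fst measurable_snd),
    (measurableSet_lt measurable_snd measurable_const).inter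
      (measurableSet_lt measurable_const measurable_fst),
    (measurableSet_lt measurable_fst measurable_const).inter
      (measurableSet_lt measurable_const measurable_snd),
    (measurableSet_lt measurable_fst measurable_snd).inter
      (measurableSet_lt measurable_snd measurable_const),
    (measurableSet_lt measurable_snd measurable_fst).inter
      (measurableSet_lt measurable_fst measurable_const)⟩

theorem S_meas : MeasurableSet Sset :=
  measurableSet_le (by fun_prop) measurable_const

set_option maxHeartbeats 1000000 in
theorem vol_S : volume Sset = 6 * volume Kset := by
  obtain ⟨m1, m2, m3, m4, m5, m6⟩ := T_meas
  set T : Set (ℝ × ℝ) := T1 ∪ T2 ∪ T3 ∪ T4 ∪ T5 ∪ T6 with hT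
  have mT : MeasurableSet T := (((((m1.union m2).union m3).union m4).union m5).union m6)
  have hcover : Sset \ T ⊆ {p : ℝ × ℝ | p.1 = 0} ∪ {p | p.2 = 0} ∪ {p | p.1 = p.2} := by
    rintro ⟨x, y⟩ ⟨-, hnT⟩
    simp only [hT, T1, T2, T3, T4, T5, T6, Set.mem_union, Set.mem_setOf_eq, not_or] at hnT
    obtain ⟨⟨⟨⟨⟨n1, n2⟩, n3⟩, n4⟩, n5⟩, n6⟩ := hnT
    simp only [Set.mem_union, Set.mem_setOf_eq]
    by_contra hcon
    push_neg at hcon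
    obtain ⟨⟨hx0, hy0⟩, hxy⟩ := hcon
    rcases lt_trichotomy x 0 with hx | hx | hx <;> rcases lt_trichotomy y 0 with hy | hy | hy <;>
      rcases lt_trichotomy x y with hlt | heq | hgt <;> tauto
  have h1 : volume Sset = volume (Sset ∩ T) := by
    have := measure_inter_add_diff (μ := volume) Sset mT
    have hz : volume (Sset \ T) = 0 := measure_mono_null hcover null_lines
    rw [hz, add_zero] at this
    exact this.symm
  have hdistrib : Sset ∩ T = (Sset ∩ T1) ∪ ((Sset ∩ T2) ∪ ((Sset ∩ T3) ∪ ((Sset ∩ T4)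
      ∪ ((Sset ∩ T5) ∪ (Sset ∩ T6))))) := by
    rw [hT, Set.inter_union_distrib_left, Set.inter_union_distrib_left,
      Set.inter_union_distrib_left, Set.inter_union_distrib_left, Set.inter_union_distrib_left,
      Set.union_assoc, Set.union_assoc, Set.union_assoc, Set.union_assoc]
  rw [h1, hdistrib]
  rw [measure_union ?d1 ?m1', measure_union ?d2 ?m2', measure_union ?d3 ?m3',
    measure_union ?d4 ?m4', measure_union ?d5 ?m5']
  case m1' => exact ((S_meas.inter m2).union ((S_meas.inter m3).union ((S_meas.inter m4).union
    ((S_meas.inter m5).union (S_meas.inter m6)))))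
  case m2' => exact ((S_meas.inter m3).union ((S_meas.inter m4).union
    ((S_meas.inter m5).union (S_meas.inter m6))))
  case m3' => exact ((S_meas.inter m4).union ((S_meas.inter m5).union (S_meas.inter m6)))
  case m4' => exact ((S_meas.inter m5).union (S_meas.inter m6))
  case m5' => exact (S_meas.inter m6)
  case d1 =>
    rw [Set.disjoint_left]
    rintro ⟨x, y⟩ ⟨-, hy, hyx⟩ hmem
    simp only [T2, T3, T4, T5, T6, Set.mem_union, Set.mem_inter_iff, Set.mem_setOf_eq] at hmem
    rcases hmem with ⟨-, h3, h4⟩ | ⟨-, h3, h4⟩ | ⟨-, h3, h4⟩ | ⟨-, h3, h4⟩ | ⟨-, h3, h4⟩ <;> linarith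
  case d2 =>
    rw [Set.disjoint_left]
    rintro ⟨x, y⟩ ⟨-, hy, hyx⟩ hmem
    simp only [T3, T4, T5, T6, Set.mem_union, Set.mem_inter_iff, Set.mem_setOf_eq] at hmem
    rcases hmem with ⟨-, h3, h4⟩ | ⟨-, h3, h4⟩ | ⟨-, h3, h4⟩ | ⟨-, h3, h4⟩ <;> linarith
  case d3 =>
    rw [Set.disjoint_left]
    rintro ⟨x, y⟩ ⟨-, hy, hyx⟩ hmem
    simp only [T4, T5, T6, Set.mem_union, Set.mem_inter_iff, Set.mem_setOf_eq] at hmem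
    rcases hmem with ⟨-, h3, h4⟩ | ⟨-, h3, h4⟩ | ⟨-, h3, h4⟩ <;> linarith
  case d4 =>
    rw [Set.disjoint_left]
    rintro ⟨x, y⟩ ⟨-, hy, hyx⟩ hmem
    simp only [T5, T6, Set.mem_union, Set.mem_inter_iff, Set.mem_setOf_eq] at hmem
    rcases hmem with ⟨-, h3, h4⟩ | ⟨-, h3, h4⟩ <;> linarith
  case d5 =>
    rw [Set.disjoint_left]
    rintro ⟨x, y⟩ ⟨-, hy, hyx⟩ ⟨-, h3, h4⟩
    linarith
  rw [sec1_s18, sec2_s18, sec3_s18, sec4_s18, sec5_s18, sec6_s18,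
    vol_image_mkL (by norm_num) _, vol_image_mkL (by norm_num) _, vol_image_mkL (by norm_num) _,
    vol_image_mkL (by norm_num) _, vol_image_mkL (by norm_num) _, vol_image_mkL (by norm_num) _]
  ring


theorem vol_Sset : volume Sset = ENNReal.ofReal (3 * Beta (1/3) (1/3)) := by
  rw [vol_S, volK, volA_eq,
    show (3 : ℝ) * Beta (1/3) (1/3) = 6 * (Beta (1/3) (1/3) / 2) by ring,
    ENNReal.ofReal_mul (by norm_num : (0:ℝ) ≤ 6)]
  norm_num

theorem disc_aux (α β : Fin 3 → ℂ)
    (hfac : ∀ x y : ℂ, ∏ i, (α i * x - β i * y) = x * y * (x - y)) :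
    discPair α β = 1 := by
  have h1 := hfac 1 0
  have h2 := hfac 0 1
  have h3 := hfac 1 1
  have h4 := hfac 1 (-1)
  simp only [Fin.prod_univ_three] at h1 h2 h3 h4
  set a0 := α 0; set a1 := α 1; set a2 := α 2
  set b0 := β 0; set b1 := β 1; set b2 := β 2
  have hc3 : a0*a1*a2 = 0 := by linear_combination h1
  have hc0 : b0*b1*b2 = 0 := by linear_combination -h2
  have hc2 : -(a0*a1*b2+a0*b1*a2+b0*a1*a2) = 1 := by linear_combination (h3 - h4)/2 + hc0
  have hc1 : a0*b1*b2+b0*a1*b2+b0*b1*a2 = -1 := by linear_combination (h3 + h4)/2 - hc3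
  have hIoi0 : Finset.Ioi (0 : Fin 3) = {1, 2} := by decide
  have hIoi1 : Finset.Ioi (1 : Fin 3) = {2} := by decide
  have hIoi2 : Finset.Ioi (2 : Fin 3) = ∅ := by decide
  unfold discPair
  rw [Fin.prod_univ_three, hIoi0, hIoi1, hIoi2]
  rw [Finset.prod_insert (by decide), Finset.prod_singleton, Finset.prod_singleton,
    Finset.prod_empty]
  linear_combination
    (18*(-(a0*a1*b2+a0*b1*a2+b0*a1*a2))*(a0*b1*b2+b0*a1*b2+b0*b1*a2)*(-(b0*b1*b2))
      - 4*(a0*b1*b2+b0*a1*b2+b0*b1*a2)^3 - 27*(a0*a1*a2)*(b0*b1*b2)^2) * hc3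
    + (4*(-(a0*a1*b2+a0*b1*a2+b0*a1*a2))^3) * hc0
    + ((-(a0*a1*b2+a0*b1*a2+b0*a1*a2)+1)*(a0*b1*b2+b0*a1*b2+b0*b1*a2)^2) * hc2
    + ((a0*b1*b2+b0*a1*b2+b0*b1*a2)-1) * hc1

end Aux

/-- The discriminant of the binary cubic form `F(X,Y) = XY(X-Y)` (computed from any
factorization of `F` into linear forms) equals `1`, and hence
`|D_F|^(1/6) · A_F = 3·B(1/3,1/3)` for this form. -/
theorem disc_xy_x_sub_y_eq_one (α β : Fin 3 → ℂ)
    (hfac : ∀ x y : ℂ, ∏ i, (α i * x - β i * y) = x * y * (x - y)) :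
    discPair α β = 1 ∧
    ENNReal.ofReal (‖discPair α β‖ ^ ((1 : ℝ) / 6))
        * volume {p : ℝ × ℝ | |p.1 * p.2 * (p.1 - p.2)| ≤ 1}
      = ENNReal.ofReal (3 * Beta (1/3) (1/3)) := by
  have hdisc := disc_aux α β hfac
  refine ⟨hdisc, ?_⟩
  rw [hdisc, norm_one, Real.one_rpow, ENNReal.ofReal_one, one_mul]
  exact vol_Sset
end
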